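/- arXiv:2001.00407 — 6 statements merged into one kernel-verified Lean document; each statement's English description precedes it below -/
import Mathlib

section
/- For any integer k ≥ 2 and any c₂ > 0, there is some θ > 0 such that if a red/blue coloring of the edges of K_N is θ-quasirandom (for any N), then the number of monochromatic copies of K_k having at least (2^{−k} + c₂)N monochromatic extensions to a monochromatic K_{k+1} is at most c₂·N^k. -/
set_option maxHeartbeats 1000000


/-- `S` spans a monochromatic clique of color `c` in the edge coloring `χ`. -/
def IsMonoOn {N : ℕ} (χ : Fin N → Fin N → Bool) (S : Finset (Fin N)) (c : Bool) : Prop :=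
  ∀ u ∈ S, ∀ v ∈ S, u ≠ v → χ u v = c

/-- Number of pairs of distinct vertices in `X × Y` joined by an edge of color `c`. -/
noncomputable def colorCount {N : ℕ} (χ : Fin N → Fin N → Bool) (c : Bool)
    (X Y : Finset (Fin N)) : ℕ :=
  {p : Fin N × Fin N | p.1 ∈ X ∧ p.2 ∈ Y ∧ p.1 ≠ p.2 ∧ χ p.1 p.2 = c}.ncard

/-- A red/blue edge coloring of `K_N` is `θ`-quasirandom if, for every pair of disjoint
vertex subsets `X`, `Y`, the number of blue edges between them deviates from `|X||Y|/2`
by at most `θ N²`. -/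
def Quasirandom {N : ℕ} (χ : Fin N → Fin N → Bool) (θ : ℝ) : Prop :=
  ∀ X Y : Finset (Fin N), Disjoint X Y →
    |(colorCount χ true X Y : ℝ) - (X.card : ℝ) * (Y.card : ℝ) / 2| ≤ θ * (N : ℝ) ^ 2

/-- Number of monochromatic extensions of the clique `S` of color `c`. -/
noncomputable def monoExtCount {N : ℕ} (χ : Fin N → Fin N → Bool) (S : Finset (Fin N))
    (c : Bool) : ℕ :=
  {v : Fin N | v ∉ S ∧ ∀ u ∈ S, χ v u = c}.ncard

/- ---------------------------------------------------------------------------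
Auxiliary development
--------------------------------------------------------------------------- -/

open Finset

attribute [local instance] Classical.propDecidable

section Aux

variable {N : ℕ}

/-- Finset version of `colorCount`. -/
noncomputable def cc (χ : Fin N → Fin N → Bool) (c : Bool) (X Y : Finset (Fin N)) : ℕ :=
  ((X ×ˢ Y).filter fun p => p.1 ≠ p.2 ∧ χ p.1 p.2 = c).card

lemma colorCount_eq_cc (χ : Fin N → Fin N → Bool) (c : Bool) (X Y : Finset (Fin N)) :
    colorCount χ c X Y = cc χ c X Y := by
  rw [colorCount, cc, ← Set.ncard_coe_finset]
  congr 1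
  ext p
  simp [Finset.mem_product, and_assoc]

lemma cc_add_cc (χ : Fin N → Fin N → Bool) (X Y : Finset (Fin N)) (hd : Disjoint X Y) :
    cc χ true X Y + cc χ false X Y = X.card * Y.card := by
  have h1 : ∀ c, cc χ c X Y = ((X ×ˢ Y).filter fun p => χ p.1 p.2 = c).card := by
    intro c
    unfold cc
    congr 1
    apply Finset.filter_congr
    intro p hp
    simp only [Finset.mem_product] at hp
    have hne : p.1 ≠ p.2 := fun h => Finset.disjoint_left.1 hd hp.1 (h ▸ hp.2)
    simp [hne]
  have hneg : (X ×ˢ Y).filter (fun p => ¬ χ p.1 p.2 = true)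
      = (X ×ˢ Y).filter (fun p => χ p.1 p.2 = false) := by
    apply Finset.filter_congr
    intro p _
    simp
  have hc := Finset.card_filter_add_card_filter_not
    (s := X ×ˢ Y) (p := fun p : Fin N × Fin N => χ p.1 p.2 = true)
  rw [hneg] at hc
  rw [h1 true, h1 false, hc, Finset.card_product]

lemma quasi_abs (χ : Fin N → Fin N → Bool) {θ : ℝ} (hq : Quasirandom χ θ) (c : Bool)
    (X Y : Finset (Fin N)) (hd : Disjoint X Y) :
    |(cc χ c X Y : ℝ) - (X.card : ℝ) * (Y.card : ℝ) / 2| ≤ θ * (N : ℝ) ^ 2 := by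
  have ht := hq X Y hd
  rw [colorCount_eq_cc] at ht
  cases c
  · have hsum : (cc χ false X Y : ℝ)
        = (X.card : ℝ) * (Y.card : ℝ) - (cc χ true X Y : ℝ) := by
      have h := cc_add_cc χ X Y hd
      have h' := congrArg (fun n : ℕ => (n : ℝ)) h
      push_cast at h'
      linarith
    rw [hsum]
    have he : (X.card : ℝ) * (Y.card : ℝ) - (cc χ true X Y : ℝ)
        - (X.card : ℝ) * (Y.card : ℝ) / 2
        = -((cc χ true X Y : ℝ) - (X.card : ℝ) * (Y.card : ℝ) / 2) := by ring
    rw [he, abs_neg]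
    exact ht
  · exact ht

lemma cc_eq_sum (χ : Fin N → Fin N → Bool) (c : Bool) (X Y : Finset (Fin N)) :
    cc χ c X Y = ∑ w ∈ X, (Y.filter fun v => w ≠ v ∧ χ w v = c).card := by
  unfold cc
  rw [Finset.card_filter, Finset.sum_product]
  refine Finset.sum_congr rfl fun w _ => ?_
  rw [Finset.card_filter]

lemma key_ineq (χ : Fin N → Fin N → Bool) (c : Bool) {θ : ℝ} (hq : Quasirandom χ θ)
    (X Y : Finset (Fin N)) (hd : Disjoint X Y) (L : ℝ)
    (hL : ∀ w ∈ X, L ≤ ((Y.filter fun v => w ≠ v ∧ χ w v = c).card : ℝ)) :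
    (X.card : ℝ) * L - (X.card : ℝ) * (Y.card : ℝ) / 2 ≤ θ * (N : ℝ) ^ 2 := by
  have h1 : (X.card : ℝ) * L ≤ (cc χ c X Y : ℝ) := by
    rw [cc_eq_sum]
    push_cast
    calc (X.card : ℝ) * L = ∑ _w ∈ X, L := by rw [Finset.sum_const, nsmul_eq_mul]
      _ ≤ ∑ w ∈ X, ((Y.filter fun v => w ≠ v ∧ χ w v = c).card : ℝ) :=
        Finset.sum_le_sum hL
  have h2 := abs_le.1 (quasi_abs χ hq c X Y hd)
  linarith [h2.2]

/-- Neighborhood of `w` in color `c` (excluding `w`). -/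
noncomputable def nbr (χ : Fin N → Fin N → Bool) (c : Bool) (w : Fin N) : Finset (Fin N) :=
  Finset.univ.filter fun v => χ v w = c ∧ v ≠ w

/-- Vertices with too many `c`-neighbors in `U`. -/
noncomputable def bigSet (χ : Fin N → Fin N → Bool) (c : Bool) (ε : ℝ) (U : Finset (Fin N)) :
    Finset (Fin N) :=
  Finset.univ.filter fun w => (1/2 + ε) * (U.card : ℝ) < ((U ∩ nbr χ c w).card : ℝ)

lemma nbr_filter_superset (χ : Fin N → Fin N → Bool) (c : Bool)
    (hsym : ∀ u v, χ u v = χ v u) (w : Fin N) (U X : Finset (Fin N)) :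
    ((U ∩ nbr χ c w).card : ℝ) - (X.card : ℝ)
      ≤ (((U \ X).filter fun v => w ≠ v ∧ χ w v = c).card : ℝ) := by
  have hsub : (U ∩ nbr χ c w) \ X ⊆ (U \ X).filter fun v => w ≠ v ∧ χ w v = c := by
    intro v hv
    rw [Finset.mem_sdiff, Finset.mem_inter] at hv
    obtain ⟨⟨hvU, hvn⟩, hvX⟩ := hv
    rw [nbr, Finset.mem_filter] at hvn
    rw [Finset.mem_filter, Finset.mem_sdiff]
    exact ⟨⟨hvU, hvX⟩, (hvn.2.2).symm, (hsym w v) ▸ hvn.2.1⟩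
  have h1 : ((U ∩ nbr χ c w).card : ℝ)
      ≤ (((U ∩ nbr χ c w) \ X).card : ℝ) + (X.card : ℝ) := by
    exact_mod_cast Finset.card_le_card_sdiff_add_card
  have h2 : ((((U ∩ nbr χ c w) \ X)).card : ℝ)
      ≤ (((U \ X).filter fun v => w ≠ v ∧ χ w v = c).card : ℝ) :=
    Nat.cast_le.2 (Finset.card_le_card hsub)
  linarith

lemma bigSet_card_le (χ : Fin N → Fin N → Bool) (c : Bool) {θ ε c₂ : ℝ}
    (hsym : ∀ u v, χ u v = χ v u) (hq : Quasirandom χ θ)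
    (hε : 0 < ε) (hc₂ : 0 < c₂) (hθ0 : 0 < θ) (hθ : θ < ε ^ 2 * c₂ ^ 2 / 4)
    (U : Finset (Fin N)) (hU : c₂ * (N : ℝ) ≤ (U.card : ℝ))
    (hN4 : (4 : ℝ) ≤ ε * (c₂ * N)) :
    ((bigSet χ c ε U).card : ℝ) ≤ 3 * (θ * N / (ε * c₂)) := by
  have hNpos : (0 : ℝ) < N := by
    by_contra h
    push_neg at h
    have h1 : c₂ * (N : ℝ) ≤ 0 := mul_nonpos_of_nonneg_of_nonpos hc₂.le h
    have h2 : ε * (c₂ * (N : ℝ)) ≤ 0 := mul_nonpos_of_nonneg_of_nonpos hε.le h1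
    linarith
  have hUpos : (0 : ℝ) < U.card := lt_of_lt_of_le (mul_pos hc₂ hNpos) hU
  have hεU : (4 : ℝ) ≤ ε * U.card := by
    have := mul_le_mul_of_nonneg_left hU hε.le
    linarith
  have hBmem : ∀ w ∈ bigSet χ c ε U,
      (1/2 + ε) * (U.card : ℝ) < ((U ∩ nbr χ c w).card : ℝ) := by
    intro w hw
    exact (Finset.mem_filter.1 hw).2
  -- part 1 : B \ U
  have hB1 : ((bigSet χ c ε U \ U).card : ℝ) * (ε * c₂) ≤ θ * N := by
    set B1 := bigSet χ c ε U \ U with hB1def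
    have hd : Disjoint B1 U := Finset.sdiff_disjoint
    have hL : ∀ w ∈ B1, (1/2 + ε) * (U.card : ℝ)
        ≤ ((U.filter fun v => w ≠ v ∧ χ w v = c).card : ℝ) := by
      intro w hw
      have h1 := hBmem w (Finset.mem_sdiff.1 hw).1
      have h2 := nbr_filter_superset χ c hsym w U ∅
      simp only [Finset.sdiff_empty, Finset.card_empty, Nat.cast_zero, sub_zero] at h2
      linarith
    have hki := key_ineq χ c hq B1 U hd _ hL
    have hB1n : (0:ℝ) ≤ (B1.card : ℝ) := Nat.cast_nonneg _
    have hmul : (B1.card : ℝ) * ε * (c₂ * N) ≤ (B1.card : ℝ) * ε * (U.card : ℝ) :=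
      mul_le_mul_of_nonneg_left hU (by positivity)
    have step1 : ((B1.card : ℝ) * (ε * c₂)) * N ≤ (θ * N) * N := by nlinarith
    exact le_of_mul_le_mul_right step1 hNpos
  -- part 2 : B ∩ U
  have hB2 : ((bigSet χ c ε U ∩ U).card : ℝ) * (ε * c₂) ≤ 2 * (θ * N) := by
    set B2 := bigSet χ c ε U ∩ U with hB2def
    have hB2n : (0:ℝ) ≤ (B2.card : ℝ) := Nat.cast_nonneg _
    rcases le_or_gt ((B2.card : ℝ)) (ε * U.card / 2) with h2 | h2
    · -- small case: use X = B2 directly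
      have hd : Disjoint B2 (U \ B2) := Finset.disjoint_sdiff
      have hL : ∀ w ∈ B2, (1/2 + ε/2) * (U.card : ℝ)
          ≤ (((U \ B2).filter fun v => w ≠ v ∧ χ w v = c).card : ℝ) := by
        intro w hw
        have h1 := hBmem w (Finset.mem_inter.1 hw).1
        have h3 := nbr_filter_superset χ c hsym w U B2
        linarith
      have hki := key_ineq χ c hq B2 (U \ B2) hd _ hL
      have hYle : ((U \ B2).card : ℝ) ≤ (U.card : ℝ) :=
        Nat.cast_le.2 (Finset.card_le_card (Finset.sdiff_subset))
      have hmulY : (B2.card : ℝ) * ((U \ B2).card : ℝ) ≤ (B2.card : ℝ) * (U.card : ℝ) :=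
        mul_le_mul_of_nonneg_left hYle hB2n
      have h3 : (B2.card : ℝ) * (ε / 2 * U.card) ≤ θ * N ^ 2 := by nlinarith
      have hmul : (B2.card : ℝ) * (ε / 2) * (c₂ * N) ≤ (B2.card : ℝ) * (ε / 2) * (U.card : ℝ) :=
        mul_le_mul_of_nonneg_left hU (by positivity)
      have step1 : ((B2.card : ℝ) * (ε * c₂)) * N ≤ (2 * (θ * N)) * N := by nlinarith
      exact le_of_mul_le_mul_right step1 hNpos
    · -- large case: impossible
      exfalso
      set m : ℕ := ⌈ε * U.card / 2⌉₊ with hmdef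
      have hm1 : (ε * U.card / 2 : ℝ) ≤ m := Nat.le_ceil _
      have hm2 : (m : ℝ) ≤ ε * U.card / 2 + 1 :=
        le_of_lt (Nat.ceil_lt_add_one (by positivity))
      have hmle : m ≤ B2.card := by
        rw [hmdef, Nat.ceil_le]
        exact_mod_cast le_of_lt h2
      obtain ⟨X, hXsub, hXcard⟩ := Finset.exists_subset_card_eq hmle
      have hXU : X ⊆ U := hXsub.trans Finset.inter_subset_right
      have hmU : m ≤ U.card := by
        rw [← hXcard]
        exact Finset.card_le_card hXU
      have hd : Disjoint X (U \ X) := Finset.disjoint_sdiff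
      have hL : ∀ w ∈ X, (1/2 + ε) * (U.card : ℝ) - m
          ≤ (((U \ X).filter fun v => w ≠ v ∧ χ w v = c).card : ℝ) := by
        intro w hw
        have h1 := hBmem w (Finset.mem_inter.1 (hXsub hw)).1
        have h3 := nbr_filter_superset χ c hsym w U X
        rw [hXcard] at h3
        linarith
      have hki := key_ineq χ c hq X (U \ X) hd _ hL
      rw [hXcard] at hki
      have hYcard : (((U \ X).card : ℕ) : ℝ) = (U.card : ℝ) - m := by
        rw [Finset.card_sdiff_of_subset hXU, hXcard, Nat.cast_sub hmU]
      rw [hYcard] at hki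
      -- hki : m * ((1/2+ε)|U| - m) - m * (|U| - m)/2 ≤ θ N²
      set u : ℝ := ε * U.card with hudef
      have hu4 : (4:ℝ) ≤ u := hεU
      have hmn : (0:ℝ) ≤ (m:ℝ) := Nat.cast_nonneg _
      have hu2 : u / 2 ≤ u - (m:ℝ)/2 := by linarith
      have hprod : (u/2) * (u/2) ≤ (m:ℝ) * (u - (m:ℝ)/2) :=
        mul_le_mul hm1 hu2 (by linarith) hmn
      have hki2 : (m:ℝ) * (u - (m:ℝ)/2) ≤ θ * N ^ 2 := by
        have : (m:ℝ) * ((1/2 + ε) * (U.card : ℝ) - m) - (m:ℝ) * ((U.card : ℝ) - m)/2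
            = (m:ℝ) * (u - (m:ℝ)/2) := by rw [hudef]; ring
        linarith [hki, this.symm.le, this.le]
      have hucN : ε * (c₂ * N) ≤ u := by
        have := mul_le_mul_of_nonneg_left hU hε.le
        linarith
      have hsq : (ε * (c₂ * N)) * (ε * (c₂ * N)) ≤ u * u :=
        mul_le_mul hucN hucN (by positivity) (by linarith)
      have hlt := mul_lt_mul_of_pos_right hθ (by positivity : (0:ℝ) < (N:ℝ)^2)
      nlinarith
  -- combine
  have hsplit : ((bigSet χ c ε U).card : ℝ)
      ≤ ((bigSet χ c ε U \ U).card : ℝ) + ((bigSet χ c ε U ∩ U).card : ℝ) := by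
    have h := Finset.card_union_le (bigSet χ c ε U \ U) (bigSet χ c ε U ∩ U)
    rw [Finset.sdiff_union_inter] at h
    exact_mod_cast h
  have h0 := mul_le_mul_of_nonneg_right hsplit (le_of_lt (mul_pos hε hc₂))
  have h1 : ((bigSet χ c ε U).card : ℝ) * (ε * c₂) ≤ 3 * (θ * N) := by nlinarith
  rw [show 3 * (θ * (N:ℝ) / (ε * c₂)) = 3 * (θ * N) / (ε * c₂) by ring,
    le_div_iff₀ (by positivity : (0:ℝ) < ε * c₂)]
  exact h1

end Aux

section Tuples

variable {N k : ℕ}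

/-- Common extension set of the first `i` vertices of the tuple `f`. -/
noncomputable def Wt (χ : Fin N → Fin N → Bool) (c : Bool) (f : Fin k → Fin N) (i : ℕ) :
    Finset (Fin N) :=
  Finset.univ.filter fun v => ∀ j : Fin k, (j : ℕ) < i → (χ v (f j) = c ∧ v ≠ f j)

lemma Wt_zero (χ : Fin N → Fin N → Bool) (c : Bool) (f : Fin k → Fin N) :
    Wt χ c f 0 = Finset.univ := by
  simp [Wt]

lemma Wt_succ (χ : Fin N → Fin N → Bool) (c : Bool) (f : Fin k → Fin N) (i : Fin k) :
    Wt χ c f ((i : ℕ) + 1) = Wt χ c f i ∩ nbr χ c (f i) := by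
  ext v
  simp only [Wt, nbr, Finset.mem_filter, Finset.mem_inter, Finset.mem_univ, true_and]
  constructor
  · intro h
    exact ⟨fun j hj => h j (by omega), (h i (by omega)).1, (h i (by omega)).2⟩
  · rintro ⟨h1, h2, h3⟩ j hj
    rcases Nat.lt_succ_iff_lt_or_eq.1 hj with h | h
    · exact h1 j h
    · have : j = i := Fin.ext h
      subst this
      exact ⟨h2, h3⟩

lemma Wt_anti (χ : Fin N → Fin N → Bool) (c : Bool) (f : Fin k → Fin N) {i i' : ℕ}
    (h : i ≤ i') : Wt χ c f i' ⊆ Wt χ c f i := by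
  intro v hv
  simp only [Wt, Finset.mem_filter, Finset.mem_univ, true_and] at *
  exact fun j hj => hv j (lt_of_lt_of_le hj h)

lemma Wt_congr (χ : Fin N → Fin N → Bool) (c : Bool) {f f' : Fin k → Fin N} {i : ℕ}
    (h : ∀ j : Fin k, (j : ℕ) < i → f j = f' j) : Wt χ c f i = Wt χ c f' i := by
  ext v
  simp only [Wt, Finset.mem_filter, Finset.mem_univ, true_and]
  constructor
  · intro hv j hj
    rw [← h j hj]
    exact hv j hj
  · intro hv j hj
    rw [h j hj]
    exact hv j hj

lemma monoExt_eq (χ : Fin N → Fin N → Bool) (c : Bool) (S : Finset (Fin N))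
    (hS : S.card = k) :
    monoExtCount χ S c = (Wt χ c (fun j => (S.orderIsoOfFin hS j : Fin N)) k).card := by
  rw [monoExtCount, ← Set.ncard_coe_finset]
  congr 1
  ext v
  simp only [Wt, Finset.coe_filter, Set.mem_setOf_eq, Finset.mem_univ, true_and]
  constructor
  · rintro ⟨hv1, hv2⟩ j _
    have hj' : ((S.orderIsoOfFin hS j : Fin N)) ∈ S := (S.orderIsoOfFin hS j).2
    exact ⟨hv2 _ hj', fun h => hv1 (h ▸ hj')⟩
  · intro h
    constructor
    · intro hv
      obtain ⟨j, hj⟩ := (S.orderIsoOfFin hS).surjective ⟨v, hv⟩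
      have : v = ((S.orderIsoOfFin hS j : Fin N)) := by rw [hj]
      exact (h j j.isLt).2 this
    · intro u hu
      obtain ⟨j, hj⟩ := (S.orderIsoOfFin hS).surjective ⟨u, hu⟩
      have : ((S.orderIsoOfFin hS j : Fin N)) = u := by rw [hj]
      rw [← this]
      exact (h j j.isLt).1

lemma image_orderIso (S : Finset (Fin N)) (hS : S.card = k) :
    Finset.image (fun j => (S.orderIsoOfFin hS j : Fin N)) Finset.univ = S := by
  ext u
  simp only [Finset.mem_image, Finset.mem_univ, true_and]
  constructor
  · rintro ⟨j, rfl⟩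
    exact (S.orderIsoOfFin hS j).2
  · intro hu
    obtain ⟨j, hj⟩ := (S.orderIsoOfFin hS).surjective ⟨u, hu⟩
    exact ⟨j, by rw [hj]⟩

lemma pow_half_add (ε : ℝ) (hε : 0 ≤ ε) (hε2 : ε ≤ 1/2) :
    ∀ k : ℕ, (1/2 + ε) ^ k ≤ (1/2 : ℝ) ^ k + k * ε := by
  intro k
  induction k with
  | zero => simp
  | succ n ih =>
    have h0 : (0:ℝ) ≤ (1/2 + ε) ^ n := by positivity
    have h1 : ((1:ℝ)/2) ^ n ≤ 1 := by
      apply pow_le_one₀ <;> norm_num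
    have hn0 : (0:ℝ) ≤ (n:ℝ) := Nat.cast_nonneg n
    have hcast : ((n+1 : ℕ) : ℝ) = (n : ℝ) + 1 := by push_cast; ring
    calc (1/2 + ε) ^ (n+1) = (1/2 + ε) ^ n * (1/2 + ε) := by ring
      _ ≤ ((1/2 : ℝ) ^ n + n * ε) * (1/2 + ε) := by nlinarith
      _ ≤ (1/2 : ℝ) ^ (n+1) + ((n:ℝ)+1) * ε := by
          have hps : (1/2 : ℝ) ^ (n+1) = (1/2 : ℝ) ^ n * (1/2) := pow_succ _ _
          nlinarith [mul_nonneg hε (by linarith : (0:ℝ) ≤ 1 - (1/2:ℝ)^n),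
            mul_nonneg (mul_nonneg hn0 hε) (by linarith : (0:ℝ) ≤ 1/2 - ε)]
      _ = (1/2 : ℝ) ^ (n+1) + ((n+1 : ℕ) : ℝ) * ε := by rw [hcast]

lemma exists_bad_step (χ : Fin N → Fin N → Bool) (c : Bool) {ε c₂ : ℝ} (f : Fin k → Fin N)
    (hε : 0 < ε) (hc₂ : 0 < c₂) (hkε : (k : ℝ) * ε ≤ c₂ / 2) (hε2 : ε ≤ 1/2)
    (hN : 0 < N)
    (hbig : (((2:ℝ) ^ k)⁻¹ + c₂) * N ≤ ((Wt χ c f k).card : ℝ)) :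
    ∃ i : Fin k, (1/2 + ε) * ((Wt χ c f i).card : ℝ) < ((Wt χ c f ((i : ℕ) + 1)).card : ℝ) := by
  by_contra hcon
  push_neg at hcon
  have key : ∀ i, i ≤ k → ((Wt χ c f i).card : ℝ) ≤ (1/2 + ε) ^ i * N := by
    intro i
    induction i with
    | zero =>
      intro _
      simp only [pow_zero, one_mul, Wt_zero, Finset.card_univ, Fintype.card_fin, le_refl]
    | succ n ih =>
      intro hn
      have hnk : n < k := hn
      have h1 := hcon ⟨n, hnk⟩
      simp only [Fin.val_mk] at h1
      have h2 := ih (le_of_lt hnk)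
      have h0 : (0:ℝ) ≤ 1/2 + ε := by linarith
      calc ((Wt χ c f (n+1)).card : ℝ) ≤ (1/2 + ε) * ((Wt χ c f n).card : ℝ) := h1
        _ ≤ (1/2 + ε) * ((1/2 + ε) ^ n * N) := by nlinarith
        _ = (1/2 + ε) ^ (n+1) * N := by ring
  have hk' := key k le_rfl
  have hpow := pow_half_add ε (le_of_lt hε) hε2 k
  have hVN : (0:ℝ) < N := by exact_mod_cast hN
  have hhalf : ((2:ℝ) ^ k)⁻¹ = (1/2 : ℝ) ^ k := by
    rw [one_div, inv_pow]
  rw [hhalf] at hbig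
  nlinarith [mul_le_mul_of_nonneg_right hpow (le_of_lt hVN)]

end Tuples

theorem few_big_books_aux (k : ℕ) (hk : 2 ≤ k) (c₂ : ℝ) (hc₂ : 0 < c₂) (hc₂1 : c₂ ≤ 1) :
    ∃ θ : ℝ, 0 < θ ∧
      ∀ (N : ℕ) (χ : Fin N → Fin N → Bool), (∀ u v, χ u v = χ v u) →
        Quasirandom χ θ →
        (({p : Finset (Fin N) × Bool | p.1.card = k ∧ IsMonoOn χ p.1 p.2 ∧
            (((2 : ℝ) ^ k)⁻¹ + c₂) * N ≤ (monoExtCount χ p.1 p.2 : ℝ)}.ncard : ℝ))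
          ≤ c₂ * (N : ℝ) ^ k := by
  have hk2 : (2:ℝ) ≤ (k:ℝ) := by exact_mod_cast hk
  have hkpos : (0:ℝ) < k := by linarith
  set ε : ℝ := c₂ / (2 * k) with hε_def
  have hε : 0 < ε := by positivity
  have hε2 : ε ≤ 1/2 := by
    rw [hε_def, div_le_iff₀ (by positivity)]
    nlinarith
  have hkε : (k : ℝ) * ε = c₂ / 2 := by
    rw [hε_def]
    field_simp
  set θ : ℝ := ε ^ 2 * c₂ ^ 2 / 64 with hθ_def
  have hθ0 : 0 < θ := by positivity
  refine ⟨θ, hθ0, ?_⟩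
  intro N χ hsym hq
  rcases Nat.lt_or_ge N 2 with hN2 | hN2
  · -- N ≤ 1 : the bad set is empty
    have hemp : {p : Finset (Fin N) × Bool | p.1.card = k ∧ IsMonoOn χ p.1 p.2 ∧
        (((2 : ℝ) ^ k)⁻¹ + c₂) * N ≤ (monoExtCount χ p.1 p.2 : ℝ)} = ∅ := by
      ext p
      simp only [Set.mem_setOf_eq, Set.mem_empty_iff_false, iff_false, not_and]
      intro h1
      exfalso
      have hle := Finset.card_le_univ p.1
      simp only [h1, Finset.card_univ, Fintype.card_fin] at hle
      omega
    rw [hemp]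
    simp only [Set.ncard_empty, Nat.cast_zero]
    positivity
  -- main case N ≥ 2
  have hN0 : 0 < N := by omega
  have hNR : (0:ℝ) < N := by exact_mod_cast hN0
  -- quasirandomness forces θ N² ≥ 1/2
  have hθN : (1:ℝ)/2 ≤ θ * (N:ℝ) ^ 2 := by
    have h01 : ((⟨0, by omega⟩ : Fin N)) ≠ (⟨1, by omega⟩ : Fin N) := by
      simp [Fin.ext_iff]
    have hd : Disjoint ({(⟨0, by omega⟩ : Fin N)} : Finset (Fin N)) {(⟨1, by omega⟩ : Fin N)} := by
      simp [Finset.disjoint_singleton, h01]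
    have h := quasi_abs χ hq true _ _ hd
    simp only [Finset.card_singleton, Nat.cast_one] at h
    set a : ℝ := (cc χ true ({(⟨0, by omega⟩ : Fin N)} : Finset (Fin N)) {(⟨1, by omega⟩ : Fin N)} : ℝ) with hadef
    have ha : a = 0 ∨ 1 ≤ a := by
      rcases Nat.eq_zero_or_pos (cc χ true ({(⟨0, by omega⟩ : Fin N)} : Finset (Fin N)) {(⟨1, by omega⟩ : Fin N)}) with h0 | h0
      · left; rw [hadef, h0]; simp
      · right; rw [hadef]; exact_mod_cast h0
    have habs : (1:ℝ)/2 ≤ |a - 1 * 1 / 2| := by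
      rcases ha with h0 | h0
      · rw [h0, abs_sub_comm, abs_of_nonneg (by norm_num)]; norm_num
      · rw [abs_of_nonneg (by linarith)]; linarith
    linarith [le_trans habs h]
  have hNbig : (4:ℝ) ≤ ε * (c₂ * N) := by
    have hsq : (32:ℝ) ≤ (ε * (c₂ * N)) ^ 2 := by
      have : θ * (N:ℝ)^2 = (ε * (c₂ * N))^2 / 64 := by rw [hθ_def]; ring
      nlinarith
    nlinarith [mul_nonneg (le_of_lt hε) (mul_nonneg (le_of_lt hc₂) (le_of_lt hNR))]
  have hθlt : θ < ε ^ 2 * c₂ ^ 2 / 4 := by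
    rw [hθ_def]
    have : (0:ℝ) < ε ^ 2 * c₂ ^ 2 := by positivity
    linarith
  -- set of bad tuples per color
  set T : Bool → Finset (Fin k → Fin N) := fun c =>
    Finset.univ.filter fun f => (((2:ℝ) ^ k)⁻¹ + c₂) * N ≤ ((Wt χ c f k).card : ℝ) with hTdef
  set A : Bool → Fin k → Finset (Fin k → Fin N) := fun c i =>
    Finset.univ.filter fun f => c₂ * N ≤ ((Wt χ c f (i : ℕ)).card : ℝ) ∧
      f i ∈ bigSet χ c ε (Wt χ c f (i : ℕ)) with hAdef
  -- T c is covered by the A c i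
  have hTsub : ∀ c, T c ⊆ Finset.univ.biUnion fun i : Fin k => A c i := by
    intro c f hf
    rw [hTdef, Finset.mem_filter] at hf
    obtain ⟨-, hbig⟩ := hf
    obtain ⟨i, hi⟩ := exists_bad_step χ c f hε hc₂ (le_of_eq hkε) hε2 hN0 hbig
    rw [Finset.mem_biUnion]
    refine ⟨i, Finset.mem_univ i, ?_⟩
    rw [hAdef, Finset.mem_filter]
    have hWi : c₂ * N ≤ ((Wt χ c f (i : ℕ)).card : ℝ) := by
      have hsub := Wt_anti χ c f (le_of_lt i.isLt)
      have hle : ((Wt χ c f k).card : ℝ) ≤ ((Wt χ c f (i : ℕ)).card : ℝ) :=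
        Nat.cast_le.2 (Finset.card_le_card hsub)
      have hp : (0:ℝ) ≤ ((2:ℝ) ^ k)⁻¹ := by positivity
      nlinarith
    refine ⟨Finset.mem_univ f, hWi, ?_⟩
    rw [bigSet, Finset.mem_filter]
    refine ⟨Finset.mem_univ _, ?_⟩
    rw [← Wt_succ]
    exact hi
  -- each A c i is small
  have hA : ∀ c (i : Fin k), ((A c i).card : ℝ) ≤ (N:ℝ) ^ (k-1) * (3 * (θ * N / (ε * c₂))) := by
    intro c i
    have hmaps : ∀ f ∈ A c i, (fun j : {j : Fin k // j ≠ i} => f j.1) ∈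
        (Finset.univ : Finset ({j : Fin k // j ≠ i} → Fin N)) := fun _ _ => Finset.mem_univ _
    rw [Finset.card_eq_sum_card_fiberwise hmaps]
    push_cast
    have hfiber : ∀ g ∈ (Finset.univ : Finset ({j : Fin k // j ≠ i} → Fin N)),
        (((A c i).filter fun f => (fun j : {j : Fin k // j ≠ i} => f j.1) = g).card : ℝ)
          ≤ 3 * (θ * N / (ε * c₂)) := by
      intro g _
      set F := (A c i).filter fun f => (fun j : {j : Fin k // j ≠ i} => f j.1) = g with hFdef
      rcases Finset.eq_empty_or_nonempty F with he | ⟨f₀, hf₀⟩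
      · rw [he]
        simp only [Finset.card_empty, Nat.cast_zero]
        positivity
      · have hf₀A := (Finset.mem_filter.1 hf₀).1
        have hf₀g := (Finset.mem_filter.1 hf₀).2
        rw [hAdef, Finset.mem_filter] at hf₀A
        obtain ⟨-, hU₀, -⟩ := hf₀A
        set U := Wt χ c f₀ (i : ℕ) with hUdef
        have hWeq : ∀ f ∈ F, Wt χ c f (i : ℕ) = U := by
          intro f hf
          apply Wt_congr
          intro j hj
          have hji : j ≠ i := by
            intro h
            rw [h] at hj
            omega
          have hfg := (Finset.mem_filter.1 hf).2
          have e1 := congrFun hfg ⟨j, hji⟩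
          have e2 := congrFun hf₀g ⟨j, hji⟩
          simp only at e1 e2
          rw [e1, e2]
        have hcard : F.card ≤ (bigSet χ c ε U).card := by
          apply Finset.card_le_card_of_injOn (fun f => f i)
          · intro f hf
            have hfA := (Finset.mem_filter.1 hf).1
            rw [hAdef, Finset.mem_filter] at hfA
            obtain ⟨-, -, hfb⟩ := hfA
            rwa [hWeq f hf] at hfb
          · intro f hf f' hf' hii
            funext j
            by_cases hji : j = i
            · rw [hji]; exact hii
            · have hfg := (Finset.mem_filter.1 hf).2
              have hfg' := (Finset.mem_filter.1 hf').2
              have e1 := congrFun hfg ⟨j, hji⟩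
              have e2 := congrFun hfg' ⟨j, hji⟩
              simp only at e1 e2
              rw [e1, e2]
        have hbig := bigSet_card_le χ c hsym hq hε hc₂ hθ0 hθlt U hU₀ hNbig
        calc (F.card : ℝ) ≤ ((bigSet χ c ε U).card : ℝ) := Nat.cast_le.2 hcard
          _ ≤ 3 * (θ * N / (ε * c₂)) := hbig
    calc (∑ g ∈ (Finset.univ : Finset ({j : Fin k // j ≠ i} → Fin N)),
          (((A c i).filter fun f => (fun j : {j : Fin k // j ≠ i} => f j.1) = g).card : ℝ))
        ≤ ∑ _g ∈ (Finset.univ : Finset ({j : Fin k // j ≠ i} → Fin N)),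
            3 * (θ * N / (ε * c₂)) := Finset.sum_le_sum hfiber
      _ = (Fintype.card ({j : Fin k // j ≠ i} → Fin N) : ℝ) * (3 * (θ * N / (ε * c₂))) := by
          rw [Finset.sum_const, Finset.card_univ, nsmul_eq_mul]
      _ = (N:ℝ) ^ (k-1) * (3 * (θ * N / (ε * c₂))) := by
          have hcard : Fintype.card ({j : Fin k // j ≠ i} → Fin N) = N ^ (k-1) := by
            rw [Fintype.card_fun, Fintype.card_fin]
            congr 1
            rw [Fintype.card_subtype_compl, Fintype.card_fin, Fintype.card_subtype_eq]
          rw [hcard]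
          push_cast
          ring
  -- bound T c
  have hT : ∀ c, ((T c).card : ℝ) ≤ (k:ℝ) * ((N:ℝ) ^ (k-1) * (3 * (θ * N / (ε * c₂)))) := by
    intro c
    have h1 : (T c).card ≤ ∑ i : Fin k, (A c i).card := by
      calc (T c).card ≤ (Finset.univ.biUnion fun i : Fin k => A c i).card :=
            Finset.card_le_card (hTsub c)
        _ ≤ ∑ i : Fin k, (A c i).card := Finset.card_biUnion_le
    calc ((T c).card : ℝ) ≤ ((∑ i : Fin k, (A c i).card : ℕ) : ℝ) := Nat.cast_le.2 h1
      _ = ∑ i : Fin k, ((A c i).card : ℝ) := by push_cast; rfl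
      _ ≤ ∑ _i : Fin k, (N:ℝ) ^ (k-1) * (3 * (θ * N / (ε * c₂))) :=
          Finset.sum_le_sum fun i _ => hA c i
      _ = (k:ℝ) * ((N:ℝ) ^ (k-1) * (3 * (θ * N / (ε * c₂)))) := by
          rw [Finset.sum_const, Finset.card_univ, Fintype.card_fin, nsmul_eq_mul]
  -- the set of bad cliques per color
  set badF : Bool → Finset (Finset (Fin N)) := fun c =>
    Finset.univ.filter fun S => S.card = k ∧
      (((2:ℝ) ^ k)⁻¹ + c₂) * N ≤ ((monoExtCount χ S c : ℕ) : ℝ) with hbadFdef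
  -- bad cliques inject into bad tuples
  have hbadT : ∀ c, (badF c).card ≤ (T c).card := by
    intro c
    apply Finset.card_le_card_of_injOn
      (fun S => fun j : Fin k => if h : S.card = k then ((S.orderIsoOfFin h j : Fin N)) else ⟨0, hN0⟩)
    · intro S hS
      rw [Finset.mem_coe, hbadFdef, Finset.mem_filter] at hS
      obtain ⟨-, hSk, hSbig⟩ := hS
      rw [Finset.mem_coe, hTdef, Finset.mem_filter]
      refine ⟨Finset.mem_univ _, ?_⟩
      have heq : (fun j : Fin k => if h : S.card = k then ((S.orderIsoOfFin h j : Fin N)) else ⟨0, hN0⟩)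
          = fun j : Fin k => ((S.orderIsoOfFin hSk j : Fin N)) := by
        funext j
        rw [dif_pos hSk]
      beta_reduce
      rw [heq, ← monoExt_eq χ c S hSk]
      exact_mod_cast hSbig
    · intro S hS S' hS' hff
      have hSm : S ∈ Finset.univ.filter (fun S : Finset (Fin N) => S.card = k ∧
          (((2:ℝ) ^ k)⁻¹ + c₂) * N ≤ ((monoExtCount χ S c : ℕ) : ℝ)) := hS
      have hSm' : S' ∈ Finset.univ.filter (fun S : Finset (Fin N) => S.card = k ∧
          (((2:ℝ) ^ k)⁻¹ + c₂) * N ≤ ((monoExtCount χ S c : ℕ) : ℝ)) := hS'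
      rw [Finset.mem_filter] at hSm hSm'
      obtain ⟨-, hSk, -⟩ := hSm
      obtain ⟨-, hSk', -⟩ := hSm'
      have h1 : Finset.image (fun j : Fin k => ((S.orderIsoOfFin hSk j : Fin N))) Finset.univ = S :=
        image_orderIso S hSk
      have h2 : Finset.image (fun j : Fin k => ((S'.orderIsoOfFin hSk' j : Fin N))) Finset.univ = S' :=
        image_orderIso S' hSk'
      have heq : (fun j : Fin k => ((S.orderIsoOfFin hSk j : Fin N)))
          = fun j : Fin k => ((S'.orderIsoOfFin hSk' j : Fin N)) := by
        have e1 : (fun S => fun j : Fin k => if h : S.card = k then ((S.orderIsoOfFin h j : Fin N)) else ⟨0, hN0⟩) S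
            = fun j : Fin k => ((S.orderIsoOfFin hSk j : Fin N)) := by
          funext j; simp only; rw [dif_pos hSk]
        have e2 : (fun S => fun j : Fin k => if h : S.card = k then ((S.orderIsoOfFin h j : Fin N)) else ⟨0, hN0⟩) S'
            = fun j : Fin k => ((S'.orderIsoOfFin hSk' j : Fin N)) := by
          funext j; simp only; rw [dif_pos hSk']
        rw [← e1, ← e2, hff]
      rw [← h1, ← h2, heq]
  -- relate the bad set to badF
  set P : Set (Finset (Fin N) × Bool) := {p : Finset (Fin N) × Bool | p.1.card = k ∧
      IsMonoOn χ p.1 p.2 ∧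
      (((2 : ℝ) ^ k)⁻¹ + c₂) * N ≤ (monoExtCount χ p.1 p.2 : ℝ)} with hPdef
  have hPcard : (P.ncard : ℝ) ≤ ((badF true).card : ℝ) + ((badF false).card : ℝ) := by
    have h1 : P.ncard = P.toFinset.card := Set.ncard_eq_toFinset_card' P
    have h2 : P.toFinset ⊆ ((badF true).image (fun S => (S, true)))
        ∪ ((badF false).image (fun S => (S, false))) := by
      intro p hp
      rw [Set.mem_toFinset, hPdef, Set.mem_setOf_eq] at hp
      obtain ⟨hp1, _, hp3⟩ := hp
      obtain ⟨S, b⟩ := p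
      have hmem : S ∈ badF b := by
        rw [hbadFdef, Finset.mem_filter]
        exact ⟨Finset.mem_univ _, hp1, hp3⟩
      cases b
      · exact Finset.mem_union_right _ (Finset.mem_image_of_mem _ hmem)
      · exact Finset.mem_union_left _ (Finset.mem_image_of_mem _ hmem)
    have h3 := Finset.card_le_card h2
    have h4 := Finset.card_union_le ((badF true).image (fun S => (S, true)))
        ((badF false).image (fun S => (S, false)))
    have h5 := Finset.card_image_le (s := badF true) (f := fun S => (S, true))
    have h6 := Finset.card_image_le (s := badF false) (f := fun S => (S, false))
    rw [h1]
    push_cast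
    have := h3.trans (h4.trans (Nat.add_le_add h5 h6))
    exact_mod_cast this
  -- final arithmetic
  have hfinal : ((badF true).card : ℝ) + ((badF false).card : ℝ) ≤ c₂ * (N:ℝ) ^ k := by
    have hb1 : ((badF true).card : ℝ) ≤ (k:ℝ) * ((N:ℝ) ^ (k-1) * (3 * (θ * N / (ε * c₂)))) :=
      le_trans (Nat.cast_le.2 (hbadT true)) (hT true)
    have hb2 : ((badF false).card : ℝ) ≤ (k:ℝ) * ((N:ℝ) ^ (k-1) * (3 * (θ * N / (ε * c₂)))) :=
      le_trans (Nat.cast_le.2 (hbadT false)) (hT false)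
    have hNk : (N:ℝ) ^ (k-1) * N = (N:ℝ) ^ k := by
      rw [← pow_succ]
      congr 1
      omega
    have hθdiv : θ / (ε * c₂) = ε * c₂ / 64 := by
      rw [hθ_def]
      field_simp
    have hmain : 2 * ((k:ℝ) * ((N:ℝ) ^ (k-1) * (3 * (θ * N / (ε * c₂))))) ≤ c₂ * (N:ℝ) ^ k := by
      have e1 : 2 * ((k:ℝ) * ((N:ℝ) ^ (k-1) * (3 * (θ * N / (ε * c₂)))))
          = 6 * (k:ℝ) * (θ / (ε * c₂)) * ((N:ℝ) ^ (k-1) * N) := by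
        field_simp
        ring
      rw [e1, hθdiv, hNk]
      have e2 : 6 * (k:ℝ) * (ε * c₂ / 64) = 3 * c₂ ^ 2 / 64 := by
        rw [hε_def]
        field_simp
        ring
      rw [e2]
      have hNpk : (0:ℝ) ≤ (N:ℝ) ^ k := by positivity
      have h64 : (0:ℝ) ≤ c₂ - 3 * c₂ ^ 2 / 64 := by nlinarith
      linarith [mul_nonneg h64 hNpk]
    linarith
  calc (P.ncard : ℝ) ≤ ((badF true).card : ℝ) + ((badF false).card : ℝ) := hPcard
    _ ≤ c₂ * (N:ℝ) ^ k := hfinal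

/-- In a sufficiently quasirandom coloring, at most `c₂ N^k` monochromatic `K_k` have
at least `(2^{-k} + c₂)N` monochromatic extensions. -/
theorem few_big_books_of_quasirandom (k : ℕ) (hk : 2 ≤ k) (c₂ : ℝ) (hc₂ : 0 < c₂) :
    ∃ θ : ℝ, 0 < θ ∧
      ∀ (N : ℕ) (χ : Fin N → Fin N → Bool), (∀ u v, χ u v = χ v u) →
        Quasirandom χ θ →
        (({p : Finset (Fin N) × Bool | p.1.card = k ∧ IsMonoOn χ p.1 p.2 ∧
            (((2 : ℝ) ^ k)⁻¹ + c₂) * N ≤ (monoExtCount χ p.1 p.2 : ℝ)}.ncard : ℝ))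
          ≤ c₂ * (N : ℝ) ^ k := by
  obtain ⟨θ, hθ0, hmain⟩ := few_big_books_aux k hk (min c₂ 1)
    (lt_min hc₂ one_pos) (min_le_right _ _)
  refine ⟨θ, hθ0, ?_⟩
  intro N χ hsym hq
  have h := hmain N χ hsym hq
  have hsub : {p : Finset (Fin N) × Bool | p.1.card = k ∧ IsMonoOn χ p.1 p.2 ∧
      (((2 : ℝ) ^ k)⁻¹ + c₂) * N ≤ (monoExtCount χ p.1 p.2 : ℝ)}
      ⊆ {p : Finset (Fin N) × Bool | p.1.card = k ∧ IsMonoOn χ p.1 p.2 ∧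
      (((2 : ℝ) ^ k)⁻¹ + min c₂ 1) * N ≤ (monoExtCount χ p.1 p.2 : ℝ)} := by
    rintro p ⟨h1, h2, h3⟩
    refine ⟨h1, h2, le_trans ?_ h3⟩
    apply mul_le_mul_of_nonneg_right _ (Nat.cast_nonneg N)
    exact add_le_add (le_refl _) (min_le_left c₂ 1)
  have hle := Set.ncard_le_ncard hsub (Set.toFinite _)
  calc (({p : Finset (Fin N) × Bool | p.1.card = k ∧ IsMonoOn χ p.1 p.2 ∧
      (((2 : ℝ) ^ k)⁻¹ + c₂) * N ≤ (monoExtCount χ p.1 p.2 : ℝ)}.ncard : ℝ))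
      ≤ (({p : Finset (Fin N) × Bool | p.1.card = k ∧ IsMonoOn χ p.1 p.2 ∧
      (((2 : ℝ) ^ k)⁻¹ + min c₂ 1) * N ≤ (monoExtCount χ p.1 p.2 : ℝ)}.ncard : ℝ)) :=
        Nat.cast_le.2 hle
    _ ≤ min c₂ 1 * (N : ℝ) ^ k := h
    _ ≤ c₂ * (N : ℝ) ^ k := by
        apply mul_le_mul_of_nonneg_right (min_le_left _ _) (by positivity)
end

section
/- For any integer k ≥ 1 and any real numbers x₁, ..., x_k ∈ [0,1], one has ∏_{i=1}^k x_i + (1/k)·∑_{i=1}^k (1 − x_i)^k ≥ 2^{1−k}. -/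
theorem cube_coeff_nonneg (m : ℕ) : (0:ℝ) ≤ (m:ℝ)*((m:ℝ)-1)*((m:ℝ)-2) := by
  rcases Nat.lt_or_ge m 2 with h | h
  · interval_cases m <;> norm_num
  · have h1 : (2:ℝ) ≤ (m:ℝ) := by exact_mod_cast h
    have h0 : (0:ℝ) ≤ (m:ℝ) := Nat.cast_nonneg m
    have : (0:ℝ) ≤ ((m:ℝ)-1)*((m:ℝ)-2) := mul_nonneg (by linarith) (by linarith)
    nlinarith [mul_nonneg h0 this]

theorem trunc_pos (n : ℕ) (z : ℝ) (hz : 0 ≤ z) :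
    1 + n*z + (n*((n:ℝ)-1))/2*z^2 + (n*((n:ℝ)-1)*((n:ℝ)-2))/6*z^3 ≤ (1+z)^n := by
  induction n with
  | zero => norm_num
  | succ m ih =>
    have h1 : (0:ℝ) ≤ 1 + z := by linarith
    have h2 := mul_le_mul_of_nonneg_right ih h1
    have h3 : (1+z)^(m+1) = (1+z)^m * (1+z) := by ring
    rw [h3]
    refine le_trans ?_ h2
    have hz4 : (0:ℝ) ≤ z^4 := pow_nonneg hz 4
    have hm := cube_coeff_nonneg m
    push_cast
    nlinarith [mul_nonneg hm hz4]

theorem trunc_neg (n : ℕ) (y : ℝ) (hy : 0 ≤ y) (hy1 : y ≤ 1) :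
    1 - n*y + (n*((n:ℝ)-1))/2*y^2 - (n*((n:ℝ)-1)*((n:ℝ)-2))/6*y^3 ≤ (1-y)^n := by
  induction n with
  | zero => norm_num
  | succ m ih =>
    have h1 : (0:ℝ) ≤ 1 - y := by linarith
    have h2 := mul_le_mul_of_nonneg_right ih h1
    have h3 : (1-y)^(m+1) = (1-y)^m * (1-y) := by ring
    rw [h3]
    refine le_trans ?_ h2
    have hz4 : (0:ℝ) ≤ y^4 := pow_nonneg hy 4
    have hm := cube_coeff_nonneg m
    push_cast
    nlinarith [mul_nonneg hm hz4]

-- L4: for k ≥ 5, 2*k^(k+1) ≤ 2^k*(k-1)^k  (ℕ)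
theorem nat_threshold : ∀ k : ℕ, 5 ≤ k → 2*k^(k+1) ≤ 2^k*(k-1)^k := by
  intro k hk
  induction k with
  | zero => omega
  | succ n ih =>
    rcases Nat.lt_or_ge n 5 with h | h
    · interval_cases n <;> simp_all <;> norm_num
    · -- n ≥ 5; goal : 2*(n+1)^(n+2) ≤ 2^(n+1)*n^(n+1)
      have IH := ih h
      -- key : (n+1)^(n+2)*(n-1)^n ≤ 2*n^(2n+2)
      have key : (n+1)^(n+2)*(n-1)^n ≤ 2*(n^(n+1))^2 := by
        have e1 : (n+1)^(n+2) = (n+1)^2*(n+1)^n := by ring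
        have e2 : (n+1)^n*(n-1)^n = ((n+1)*(n-1))^n := (mul_pow _ _ n).symm
        have e3 : (n+1)*(n-1) ≤ n^2 := by
          cases n with
          | zero => omega
          | succ m =>
            have : (m+1+1)*(m+1-1) = (m+1)*(m+1) - 1 := by simp; ring_nf; omega
            simp only [this]; have : (m+1)^2 = (m+1)*(m+1) := by ring
            omega
        have e4 : ((n+1)*(n-1))^n ≤ (n^2)^n := Nat.pow_le_pow_left e3 n
        have e5 : (n+1)^2 ≤ 2*n^2 := by nlinarith
        calc (n+1)^(n+2)*(n-1)^n = (n+1)^2*(((n+1)*(n-1))^n) := by rw [e1, mul_assoc, e2]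
          _ ≤ (2*n^2)*((n^2)^n) := Nat.mul_le_mul e5 e4
          _ = 2*(n^(n+1))^2 := by ring
      -- from IH : 2*n^(n+1) ≤ 2^n*(n-1)^n
      -- multiply both sides of goal by (n-1)^n
      have hpos : 0 < (n-1)^n := Nat.pow_pos (by omega)
      have chain : (2*(n+1)^(n+2))*(n-1)^n ≤ (2^(n+1)*n^(n+1))*(n-1)^n := by
        calc (2*(n+1)^(n+2))*(n-1)^n = 2*((n+1)^(n+2)*(n-1)^n) := by ring
          _ ≤ 2*(2*(n^(n+1))^2) := Nat.mul_le_mul_left 2 key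
          _ = (2*n^(n+1))*(2*n^(n+1)) := by ring
          _ ≤ (2^n*(n-1)^n)*(2*n^(n+1)) := Nat.mul_le_mul_right _ IH
          _ = (2^(n+1)*n^(n+1))*(n-1)^n := by ring
      exact Nat.le_of_mul_le_mul_right chain hpos

theorem bern_piece (n : ℕ) (t : ℝ) (ht : 0 ≤ t) :
    ((n:ℝ)+1)^(n+1) * t ≤ ((n:ℝ)+t)^(n+1) := by
  have hn1 : (0:ℝ) < (n:ℝ)+1 := by positivity
  have hm2 : (-2:ℝ) ≤ (t-1)/((n:ℝ)+1) := by
    rw [le_div_iff₀ hn1]; nlinarith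
  have key := one_add_mul_le_pow hm2 (n+1)
  push_cast at key
  have e1 : 1 + ((n:ℝ)+1) * ((t-1)/((n:ℝ)+1)) = t := by field_simp; ring
  have e2 : (1 + (t-1)/((n:ℝ)+1)) = ((n:ℝ)+t)/((n:ℝ)+1) := by field_simp; ring
  rw [e1, e2, div_pow] at key
  have hp : (0:ℝ) < ((n:ℝ)+1)^(n+1) := by positivity
  rw [← le_div_iff₀' hp]
  exact key

theorem PH {ι : Type*} (s : Finset ι) (a : ι → ℝ) (ha : ∀ i ∈ s, 0 < a i) :
    ((s.card:ℝ))^s.card ≤ (∏ i ∈ s, a i) * (∑ i ∈ s, (a i)⁻¹)^s.card := by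
  induction s using Finset.cons_induction with
  | empty => simp
  | cons i s his ih =>
    have hai : 0 < a i := ha i (Finset.mem_cons_self i s)
    have has : ∀ j ∈ s, 0 < a j := fun j hj => ha j (Finset.mem_cons_of_mem hj)
    rw [Finset.prod_cons, Finset.sum_cons, Finset.card_cons]
    rcases Nat.eq_zero_or_pos s.card with h0 | hpos
    · have hs : s = ∅ := Finset.card_eq_zero.mp h0
      subst hs
      simp only [Finset.prod_empty, Finset.sum_empty, Finset.card_empty, add_zero, mul_one]
      push_cast
      rw [pow_one, pow_one, mul_inv_cancel₀ (ne_of_gt hai)]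
    · have IH := ih has
      have hH : 0 < ∑ j ∈ s, (a j)⁻¹ :=
        Finset.sum_pos (fun j hj => inv_pos.mpr (has j hj)) (Finset.card_pos.mp hpos)
      have hA : 0 < ∏ j ∈ s, a j := Finset.prod_pos has
      set n := s.card with hn
      set H := ∑ j ∈ s, (a j)⁻¹ with hHdef
      set A := ∏ j ∈ s, a j with hAdef
      have hn0 : (0:ℝ) < n := by exact_mod_cast hpos
      have step : ((n:ℝ)+1)^(n+1) * H^n / (n:ℝ)^n ≤ a i * (H + (a i)⁻¹)^(n+1) := by
        have ht : (0:ℝ) ≤ (n:ℝ)*(a i)⁻¹/H := by positivity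
        have hb := bern_piece n ((n:ℝ)*(a i)⁻¹/H) ht
        have e : ((n:ℝ) + (n:ℝ)*(a i)⁻¹/H) = ((n:ℝ)/H) * (H + (a i)⁻¹) := by field_simp
        rw [e, mul_pow] at hb
        have hinv : 0 < (a i)⁻¹ := inv_pos.mpr hai
        have h2 : ((n:ℝ)+1)^(n+1) * ((n:ℝ)*(a i)⁻¹/H) * (H^(n+1) * a i / ((n:ℝ)^(n+1))) ≤
            ((n:ℝ)/H)^(n+1) * (H + (a i)⁻¹)^(n+1) * (H^(n+1) * a i / ((n:ℝ)^(n+1))) := by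
          apply mul_le_mul_of_nonneg_right hb
          positivity
        have e3 : ((n:ℝ)+1)^(n+1) * H^n / (n:ℝ)^n
            = ((n:ℝ)+1)^(n+1) * ((n:ℝ)*(a i)⁻¹/H) * (H^(n+1) * a i / ((n:ℝ)^(n+1))) := by
          field_simp
          ring
        have e4 : ((n:ℝ)/H)^(n+1) * (H + (a i)⁻¹)^(n+1) * (H^(n+1) * a i / ((n:ℝ)^(n+1)))
            = a i * (H + (a i)⁻¹)^(n+1) := by
          rw [div_pow]
          field_simp
        rw [e3, ← e4]
        exact h2
      have hAn : ((n:ℝ)^n / H^n) ≤ A := by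
        rw [div_le_iff₀ (by positivity)]
        exact IH
      push_cast
      have efin : ((n:ℝ)+1)^(n+1) = ((n:ℝ)^n/H^n) * (((n:ℝ)+1)^(n+1) * H^n / (n:ℝ)^n) := by
        field_simp
      rw [efin]
      calc ((n:ℝ)^n/H^n) * (((n:ℝ)+1)^(n+1) * H^n / (n:ℝ)^n)
          ≤ A * (a i * (H + (a i)⁻¹)^(n+1)) := by
            apply mul_le_mul hAn step (div_nonneg (mul_nonneg (pow_nonneg (by linarith) _) (pow_nonneg hH.le _)) (pow_nonneg hn0.le _)) (le_of_lt hA)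
        _ = a i * A * ((a i)⁻¹ + H)^(n+1) := by rw [add_comm H]; ring

theorem prod_add_inv_sum {ι : Type*} (s : Finset ι) (a : ι → ℝ) (ha : ∀ i ∈ s, 0 < a i) :
    (s.card:ℝ) + 1 ≤ (∏ i ∈ s, a i) + ∑ i ∈ s, (a i)⁻¹ := by
  rcases Nat.eq_zero_or_pos s.card with h0 | hpos
  · have hs : s = ∅ := Finset.card_eq_zero.mp h0
    subst hs; simp
  · have hH : 0 < ∑ j ∈ s, (a j)⁻¹ :=
      Finset.sum_pos (fun j hj => inv_pos.mpr (ha j hj)) (Finset.card_pos.mp hpos)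
    set n := s.card
    set H := ∑ j ∈ s, (a j)⁻¹ with hHdef
    have hn0 : (0:ℝ) < n := by exact_mod_cast hpos
    have hA : ((n:ℝ)^n / H^n) ≤ ∏ i ∈ s, a i := by
      rw [div_le_iff₀ (by positivity)]
      exact PH s a ha
    have scalar : (n:ℝ) + 1 ≤ (n:ℝ)^n/H^n + H := by
      set x := (n:ℝ)/H with hx
      have hx0 : 0 < x := by positivity
      have hm2 : (-2:ℝ) ≤ x - 1 := by linarith
      have hb := one_add_mul_le_pow hm2 (n+1)
      push_cast at hb
      have e : (1 + (x-1)) = x := by ring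
      rw [e] at hb
      have hnum : 0 ≤ (x^(n+1) - (1 + ((n:ℝ)+1)*(x-1)))/x := by
        apply div_nonneg _ (le_of_lt hx0)
        linarith
      have hxn : (n:ℝ)^n/H^n = x^n := by rw [hx, div_pow]
      have hHx : H = (n:ℝ)/x := by rw [hx]; field_simp
      have e2 : x^n + (n:ℝ)/x - ((n:ℝ)+1) = (x^(n+1) - (1 + ((n:ℝ)+1)*(x-1)))/x := by
        field_simp
        ring
      rw [hxn, hHx]
      linarith [e2 ▸ hnum]
    linarith

theorem brN_hi (k : ℕ) (hk : 3 ≤ k) (b : ℝ) (h1 : 1 ≤ b) (h2 : b ≤ 2) :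
    0 ≤ b*(2-b)^k + ((k:ℝ)-1)*b - (k:ℝ) := by
  have hK : (3:ℝ) ≤ (k:ℝ) := by exact_mod_cast hk
  have hpow : 0 ≤ (2-b)^k := pow_nonneg (by linarith) k
  rcases le_or_gt ((k:ℝ)*(b-1)) b with hcase | hcase
  · -- poly case : (k-1)(b-1) ≤ 1
    set y := b - 1 with hy
    have hy0 : 0 ≤ y := by simp only [hy]; linarith
    have hy1 : y ≤ 1 := by simp only [hy]; linarith
    have hw : ((k:ℝ)-1)*y ≤ 1 := by simp only [hy]; nlinarith
    have hR := trunc_neg k y hy0 hy1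
    have hQ : 0 ≤ 3*((k:ℝ)-3) + ((k:ℝ)-1)*(5-(k:ℝ))*y - ((k:ℝ)-1)*((k:ℝ)-2)*y^2 := by
      have hterm : 0 ≤ ((k:ℝ)-1)*y*(1-((k:ℝ)-2)*y) := by
        apply mul_nonneg (mul_nonneg (by linarith) hy0)
        nlinarith
      rcases le_or_gt (k:ℝ) 4 with h4 | h4
      · nlinarith [mul_nonneg (mul_nonneg (show (0:ℝ) ≤ 4-(k:ℝ) by linarith) (show (0:ℝ) ≤ (k:ℝ)-1 by linarith)) hy0]
      · nlinarith [mul_nonneg (show (0:ℝ) ≤ (k:ℝ)-4 by linarith) (show 0 ≤ 1 - ((k:ℝ)-1)*y by linarith)]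
    have hbe : b = 1 + y := by simp only [hy]; ring
    have key : (1+y)*(1 - k*y + ((k:ℝ)*((k:ℝ)-1))/2*y^2 - ((k:ℝ)*((k:ℝ)-1)*((k:ℝ)-2))/6*y^3)
        + ((k:ℝ)-1)*(1+y) - (k:ℝ)
        = y^2*((k:ℝ)*(3*((k:ℝ)-3) + ((k:ℝ)-1)*(5-(k:ℝ))*y - ((k:ℝ)-1)*((k:ℝ)-2)*y^2))/6 := by
      ring
    rw [hbe, show (2-(1+y)) = 1-y by ring]
    have hRmul := mul_le_mul_of_nonneg_left hR (show (0:ℝ) ≤ 1+y by linarith)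
    have h6 : 0 ≤ y^2*((k:ℝ)*(3*((k:ℝ)-3) + ((k:ℝ)-1)*(5-(k:ℝ))*y - ((k:ℝ)-1)*((k:ℝ)-2)*y^2))/6 :=
      div_nonneg (mul_nonneg (sq_nonneg y) (mul_nonneg (by linarith) hQ)) (by norm_num)
    nlinarith [key, hRmul, h6]
  · -- easy case
    nlinarith [mul_nonneg (show (0:ℝ) ≤ b by linarith) hpow]

theorem brN_lo (k : ℕ) (hk : 5 ≤ k) (b : ℝ) (h1 : 2/(k:ℝ) ≤ b) (h2 : b ≤ 1) :
    0 ≤ b*(2-b)^k + ((k:ℝ)-1)*b - (k:ℝ) := by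
  have hK : (5:ℝ) ≤ (k:ℝ) := by exact_mod_cast hk
  have hK0 : (0:ℝ) < (k:ℝ) := by linarith
  have hb0 : (0:ℝ) ≤ b := le_trans (by positivity) h1
  set z := 1 - b with hz
  have hz0 : 0 ≤ z := by simp only [hz]; linarith
  have hzt : (k:ℝ)*z ≤ (k:ℝ)-2 := by
    have : 2 ≤ (k:ℝ)*b := by rw [div_le_iff₀ hK0] at h1; linarith
    simp only [hz]; nlinarith
  have hR := trunc_pos k z hz0
  have hQ : 0 ≤ 3*((k:ℝ)-3) + ((k:ℝ)-1)*((k:ℝ)-5)*z - ((k:ℝ)-1)*((k:ℝ)-2)*z^2 := by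
    have hid : ((k:ℝ)-2)*(k:ℝ)^2*(3*((k:ℝ)-3) + ((k:ℝ)-1)*((k:ℝ)-5)*z - ((k:ℝ)-1)*((k:ℝ)-2)*z^2)
        = 3*((k:ℝ)-3)*(k:ℝ)^2*(((k:ℝ)-2)-(k:ℝ)*z) + 2*((k:ℝ)-4)*((k:ℝ)^2-(k:ℝ)+1)*(k:ℝ)*z
          + ((k:ℝ)-1)*((k:ℝ)-2)^2*(k:ℝ)*z*(((k:ℝ)-2)-(k:ℝ)*z) := by ring
    have t1 : 0 ≤ 3*((k:ℝ)-3)*(k:ℝ)^2*(((k:ℝ)-2)-(k:ℝ)*z) := by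
      apply mul_nonneg _ (by linarith)
      apply mul_nonneg (by linarith) (sq_nonneg _)
    have t2 : 0 ≤ 2*((k:ℝ)-4)*((k:ℝ)^2-(k:ℝ)+1)*(k:ℝ)*z := by
      apply mul_nonneg _ hz0
      apply mul_nonneg _ (by linarith)
      apply mul_nonneg _ (by nlinarith)
      linarith
    have t3 : 0 ≤ ((k:ℝ)-1)*((k:ℝ)-2)^2*(k:ℝ)*z*(((k:ℝ)-2)-(k:ℝ)*z) := by
      apply mul_nonneg _ (by linarith)
      apply mul_nonneg _ hz0
      apply mul_nonneg _ (by linarith)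
      apply mul_nonneg (by linarith) (sq_nonneg _)
    nlinarith [sq_nonneg (k:ℝ)]
  have hbe : b = 1 - z := by simp only [hz]; ring
  have key : (1-z)*(1 + k*z + ((k:ℝ)*((k:ℝ)-1))/2*z^2 + ((k:ℝ)*((k:ℝ)-1)*((k:ℝ)-2))/6*z^3)
      + ((k:ℝ)-1)*(1-z) - (k:ℝ)
      = z^2*((k:ℝ)*(3*((k:ℝ)-3) + ((k:ℝ)-1)*((k:ℝ)-5)*z - ((k:ℝ)-1)*((k:ℝ)-2)*z^2))/6 := by
    ring
  rw [hbe, show (2-(1-z)) = 1+z by ring]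
  have hRmul := mul_le_mul_of_nonneg_left hR (show (0:ℝ) ≤ 1-z by linarith)
  have h6 : 0 ≤ z^2*((k:ℝ)*(3*((k:ℝ)-3) + ((k:ℝ)-1)*((k:ℝ)-5)*z - ((k:ℝ)-1)*((k:ℝ)-2)*z^2))/6 :=
    div_nonneg (mul_nonneg (sq_nonneg z) (mul_nonneg (by linarith) hQ)) (by norm_num)
  calc (0:ℝ) ≤ z^2*((k:ℝ)*(3*((k:ℝ)-3) + ((k:ℝ)-1)*((k:ℝ)-5)*z - ((k:ℝ)-1)*((k:ℝ)-2)*z^2))/6 := h6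
    _ = (1-z)*(1 + k*z + ((k:ℝ)*((k:ℝ)-1))/2*z^2 + ((k:ℝ)*((k:ℝ)-1)*((k:ℝ)-2))/6*z^3)
        + ((k:ℝ)-1)*(1-z) - (k:ℝ) := key.symm
    _ ≤ (1-z)*(1+z)^k + ((k:ℝ)-1)*(1-z) - (k:ℝ) := by linarith [hRmul]

theorem bracket (k : ℕ) (hk : 5 ≤ k) (b : ℝ) (hlo : 2/(k:ℝ) ≤ b) (hhi : b ≤ 2) :
    1/(k:ℝ) - 1 ≤ (2-b)^k/(k:ℝ) - 1/b := by
  have hK : (5:ℝ) ≤ (k:ℝ) := by exact_mod_cast hk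
  have hK0 : (0:ℝ) < (k:ℝ) := by linarith
  have hb0 : (0:ℝ) < b := lt_of_lt_of_le (by positivity) hlo
  have hN : 0 ≤ b*(2-b)^k + ((k:ℝ)-1)*b - (k:ℝ) := by
    rcases le_or_gt b 1 with h | h
    · exact brN_lo k hk b hlo h
    · exact brN_hi k (by omega) b (le_of_lt h) hhi
  rw [← sub_nonneg]
  have e : (2-b)^k/(k:ℝ) - 1/b - (1/(k:ℝ) - 1)
      = (b*(2-b)^k + ((k:ℝ)-1)*b - (k:ℝ))/((k:ℝ)*b) := by
    field_simp
    ring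
  rw [e]
  positivity

theorem key_big (k : ℕ) (hk : 5 ≤ k) (x : Fin k → ℝ)
    (hx : ∀ i, x i ∈ Set.Icc (0 : ℝ) 1) :
    (2:ℝ) ≤ (∏ i, (2*x i)) + (1/(k:ℝ)) * ∑ i, (2-2*x i)^k := by
  have hk1 : 1 ≤ k := by omega
  have hK : (5:ℝ) ≤ (k:ℝ) := by exact_mod_cast hk
  have hK0 : (0:ℝ) < (k:ℝ) := by linarith
  by_cases hex : ∃ j, x j ≤ 1/(k:ℝ)
  · obtain ⟨j, hj⟩ := hex
    have hprod : 0 ≤ ∏ i, (2*x i) :=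
      Finset.prod_nonneg (fun i _ => by linarith [(hx i).1])
    have hterm : ∀ i ∈ Finset.univ, (0:ℝ) ≤ (2-2*x i)^k :=
      fun i _ => pow_nonneg (by linarith [(hx i).2]) k
    have hsum : (2-2*x j)^k ≤ ∑ i, (2-2*x i)^k :=
      Finset.single_le_sum hterm (Finset.mem_univ j)
    have hxj : 2*((k:ℝ)-1)/(k:ℝ) ≤ 2-2*x j := by
      rw [div_le_iff₀ hK0]
      have : x j * (k:ℝ) ≤ 1 := by
        have := mul_le_mul_of_nonneg_right hj (le_of_lt hK0)
        rwa [one_div, inv_mul_cancel₀ (ne_of_gt hK0)] at this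
      nlinarith
    have hpow : (2*((k:ℝ)-1)/(k:ℝ))^k ≤ (2-2*x j)^k := by
      apply pow_le_pow_left₀ (div_nonneg (by linarith) (le_of_lt hK0)) hxj
    have hthr : (2:ℝ) ≤ (1/(k:ℝ)) * (2*((k:ℝ)-1)/(k:ℝ))^k := by
      have hnat := nat_threshold k hk
      have hcast : (2:ℝ)*(k:ℝ)^(k+1) ≤ 2^k*((k:ℝ)-1)^k := by
        have h1 : ((k-1:ℕ):ℝ) = (k:ℝ)-1 := by
          rw [Nat.cast_sub hk1]; norm_num
        calc (2:ℝ)*(k:ℝ)^(k+1) = ((2*k^(k+1) : ℕ) : ℝ) := by push_cast; ring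
          _ ≤ ((2^k*(k-1)^k : ℕ) : ℝ) := by exact_mod_cast hnat
          _ = 2^k*((k:ℝ)-1)^k := by push_cast [h1]; ring
      have e : (1/(k:ℝ)) * (2*((k:ℝ)-1)/(k:ℝ))^k = (2^k*((k:ℝ)-1)^k)/(k:ℝ)^(k+1) := by
        rw [div_pow, mul_pow, pow_succ, one_div, div_eq_mul_inv, div_eq_mul_inv, mul_inv]
        ring
      rw [e, le_div_iff₀ (by positivity)]
      linarith
    have hmono : (1/(k:ℝ)) * (2*((k:ℝ)-1)/(k:ℝ))^k ≤ (1/(k:ℝ)) * ∑ i, (2-2*x i)^k := by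
      apply mul_le_mul_of_nonneg_left _ (by positivity)
      linarith
    linarith
  · push_neg at hex
    set b : Fin k → ℝ := fun i => 2 * x i with hbdef
    have hblo : ∀ i, 2/(k:ℝ) ≤ b i := by
      intro i
      have := hex i
      simp only [hbdef]
      rw [div_le_iff₀ hK0]
      have h1 : 1 < x i * (k:ℝ) := by
        rw [one_div] at this
        calc (1:ℝ) = (k:ℝ)⁻¹*(k:ℝ) := by field_simp
          _ < x i * (k:ℝ) := by
            apply mul_lt_mul_of_pos_right this hK0
      nlinarith
    have hbhi : ∀ i, b i ≤ 2 := fun i => by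
      simp only [hbdef]; linarith [(hx i).2]
    have hbpos : ∀ i ∈ Finset.univ, (0:ℝ) < b i :=
      fun i _ => lt_of_lt_of_le (by positivity) (hblo i)
    have hL5 := prod_add_inv_sum Finset.univ b hbpos
    rw [Finset.card_univ, Fintype.card_fin] at hL5
    have hbr : ∀ i ∈ Finset.univ, 1/(k:ℝ) - 1 ≤ (2-b i)^k/(k:ℝ) - 1/(b i) :=
      fun i _ => bracket k hk (b i) (hblo i) (hbhi i)
    have hsum := Finset.sum_le_sum hbr
    rw [Finset.sum_const, Finset.card_univ, Fintype.card_fin, nsmul_eq_mul] at hsum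
    have esplit : ∑ i, ((2-b i)^k/(k:ℝ) - 1/(b i))
        = (1/(k:ℝ)) * (∑ i, (2-b i)^k) - ∑ i, (b i)⁻¹ := by
      rw [Finset.sum_sub_distrib, Finset.mul_sum]
      congr 1
      · apply Finset.sum_congr rfl; intro i _; rw [div_eq_mul_inv]; ring
      · apply Finset.sum_congr rfl; intro i _; rw [one_div]
    rw [esplit] at hsum
    have goal' : (2:ℝ) ≤ ∏ i, b i + (1/(k:ℝ)) * ∑ i, (2 - b i)^k := by
      calc (2:ℝ) = ((k:ℝ)+1) + ((k:ℝ)*(1/(k:ℝ) - 1)) := by field_simp; ring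
        _ ≤ (∏ i, b i + ∑ i, (b i)⁻¹) + ((1/(k:ℝ)) * (∑ i, (2-b i)^k) - ∑ i, (b i)⁻¹) := by
            apply add_le_add hL5 hsum
        _ = ∏ i, b i + (1/(k:ℝ)) * (∑ i, (2-b i)^k) := by ring
    simpa only [hbdef] using goal'

theorem k3m1 (u v y : ℝ) (hu0 : 0 ≤ u) (hu1 : u ≤ 1/2) (hv0 : 0 ≤ v) (hv1 : v ≤ 1/2)
    (hy0 : 0 ≤ y) (hy1 : y ≤ 1/2) :
    0 ≤ 12*(u+v-y)^2 + 12*u^2-16*u^3 + 12*v^2-16*v^3 + 12*y^2+16*y^3 - 48*u*v*y := by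
  nlinarith [sq_nonneg (u-v), sq_nonneg (u+v-y), mul_nonneg hu0 hv0, mul_nonneg (mul_nonneg hu0 hv0) hy0,
    mul_nonneg hu0 hy0, mul_nonneg hv0 hy0, sq_nonneg (u+v), mul_nonneg (mul_nonneg hu0 hu0) (show 0 ≤ 1/2 - u by linarith),
    mul_nonneg (mul_nonneg hv0 hv0) (show 0 ≤ 1/2 - v by linarith),
    mul_nonneg (mul_nonneg hu0 hv0) (show 0 ≤ 1/2 - y by linarith)]

theorem k3core (u v w : ℝ) (hu0 : -(1/2) ≤ u) (hu1 : u ≤ 1/2) (hv0 : -(1/2) ≤ v) (hv1 : v ≤ 1/2)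
    (hw0 : -(1/2) ≤ w) (hw1 : w ≤ 1/2) :
    0 ≤ 12*(u+v+w)^2 + 12*u^2-16*u^3 + 12*v^2-16*v^3 + 12*w^2-16*w^3 + 48*u*v*w := by
  rcases le_or_gt 0 u with pu | nu <;> rcases le_or_gt 0 v with pv | nv <;> rcases le_or_gt 0 w with pw | nw
  · -- +++
    linarith [mul_nonneg (mul_nonneg pu pv) pw,
      mul_nonneg (mul_nonneg pu pu) (show 0 ≤ 3 - 4*u by linarith),
      mul_nonneg (mul_nonneg pv pv) (show 0 ≤ 3 - 4*v by linarith),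
      mul_nonneg (mul_nonneg pw pw) (show 0 ≤ 3 - 4*w by linarith), sq_nonneg (u+v+w)]
  · -- ++- : m1 with y = -w
    nlinarith [k3m1 u v (-w) pu hu1 pv hv1 (by linarith) (by linarith)]
  · -- +-+ : m1 with (u,w,-v)
    nlinarith [k3m1 u w (-v) pu hu1 pw hw1 (by linarith) (by linarith)]
  · -- +-- : m2 : u ≥ 0, v,w < 0 : uvw ≥ 0
    linarith [mul_nonneg (mul_nonneg (show 0 ≤ -v by linarith) (show 0 ≤ -w by linarith)) pu,
      mul_nonneg (mul_nonneg pu pu) (show 0 ≤ 3 - 4*u by linarith),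
      mul_nonneg (mul_nonneg (show 0 ≤ -v by linarith) (show 0 ≤ -v by linarith)) (show 0 ≤ -v by linarith),
      mul_nonneg (mul_nonneg (show 0 ≤ -w by linarith) (show 0 ≤ -w by linarith)) (show 0 ≤ -w by linarith),
      sq_nonneg (u+v+w), sq_nonneg u, sq_nonneg v, sq_nonneg w]
  · -- -++ : m1 with (v,w,-u)
    nlinarith [k3m1 v w (-u) pv hv1 pw hw1 (by linarith) (by linarith)]
  · -- -+- : m2 : v ≥ 0
    linarith [mul_nonneg (mul_nonneg (show 0 ≤ -u by linarith) (show 0 ≤ -w by linarith)) pv,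
      mul_nonneg (mul_nonneg pv pv) (show 0 ≤ 3 - 4*v by linarith),
      mul_nonneg (mul_nonneg (show 0 ≤ -u by linarith) (show 0 ≤ -u by linarith)) (show 0 ≤ -u by linarith),
      mul_nonneg (mul_nonneg (show 0 ≤ -w by linarith) (show 0 ≤ -w by linarith)) (show 0 ≤ -w by linarith),
      sq_nonneg (u+v+w), sq_nonneg u, sq_nonneg v, sq_nonneg w]
  · -- --+ : m2 : w ≥ 0
    linarith [mul_nonneg (mul_nonneg (show 0 ≤ -u by linarith) (show 0 ≤ -v by linarith)) pw,
      mul_nonneg (mul_nonneg pw pw) (show 0 ≤ 3 - 4*w by linarith),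
      mul_nonneg (mul_nonneg (show 0 ≤ -u by linarith) (show 0 ≤ -u by linarith)) (show 0 ≤ -u by linarith),
      mul_nonneg (mul_nonneg (show 0 ≤ -v by linarith) (show 0 ≤ -v by linarith)) (show 0 ≤ -v by linarith),
      sq_nonneg (u+v+w), sq_nonneg u, sq_nonneg v, sq_nonneg w]
  · -- --- : m3
    linarith [sq_nonneg (u+v+w), sq_nonneg (u-v),
      mul_nonneg (mul_nonneg (show 0 ≤ -u by linarith) (show 0 ≤ -u by linarith)) (show 0 ≤ -u by linarith),
      mul_nonneg (mul_nonneg (show 0 ≤ -v by linarith) (show 0 ≤ -v by linarith)) (show 0 ≤ -v by linarith),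
      mul_nonneg (mul_nonneg (show 0 ≤ -w by linarith) (show 0 ≤ -w by linarith)) (show 0 ≤ -w by linarith),
      mul_nonneg (mul_nonneg (show 0 ≤ -u by linarith) (show 0 ≤ -v by linarith)) (show 0 ≤ 1/2 + w by linarith),
      sq_nonneg u, sq_nonneg v, sq_nonneg w]

theorem key3 (x : Fin 3 → ℝ) (hx : ∀ i, x i ∈ Set.Icc (0 : ℝ) 1) :
    (2:ℝ) ≤ (∏ i, (2*x i)) + (1/(3:ℝ)) * ∑ i, (2-2*x i)^3 := by
  have h0 := hx 0; have h1 := hx 1; have h2 := hx 2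
  simp only [Set.mem_Icc] at h0 h1 h2
  rw [Fin.prod_univ_three, Fin.sum_univ_three]
  have := k3core (x 0 - 1/2) (x 1 - 1/2) (x 2 - 1/2)
    (by linarith [h0.1]) (by linarith [h0.2]) (by linarith [h1.1]) (by linarith [h1.2])
    (by linarith [h2.1]) (by linarith [h2.2])
  nlinarith [this]

theorem k4aux (a : ℝ) : 0 ≤ (2-a)^4 + 16*a - 12 := by
  nlinarith [sq_nonneg ((2-a)^2 - 2), sq_nonneg a]

theorem k4rho (b : ℝ) (h1 : 1/2 ≤ b) (h2 : b ≤ 2) : 0 ≤ 3*b*(2-b)^4 + 4*b - 6 := by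
  nlinarith [mul_nonneg (show (0:ℝ) ≤ b - 1/2 by linarith) (show (0:ℝ) ≤ 2 - b by linarith),
    sq_nonneg (b - 27/20), sq_nonneg (b-1), sq_nonneg ((2-b)^2 - 1/2), mul_nonneg (show (0:ℝ) ≤ b - 1/2 by linarith) (sq_nonneg (b - 27/20)),
    mul_nonneg (show (0:ℝ) ≤ 2 - b by linarith) (sq_nonneg (b - 27/20))]

theorem k4brN (b : ℝ) (h1 : 1/2 ≤ b) (h2 : b ≤ 2) : 0 ≤ b*(2-b)^4 + 3*b - 4 := by
  rcases le_or_gt b 1 with h | h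
  · nlinarith [mul_nonneg (show (0:ℝ) ≤ b - 1/2 by linarith) (show (0:ℝ) ≤ 1 - b by linarith),
      sq_nonneg (b-1), mul_nonneg (mul_nonneg (show (0:ℝ) ≤ b - 1/2 by linarith) (show (0:ℝ) ≤ 1 - b by linarith)) (show (0:ℝ) ≤ 2-b by linarith),
      sq_nonneg (b - 1/2)]
  · have := brN_hi 4 (by norm_num) b (le_of_lt h) h2
    norm_num at this
    linarith

-- bracket form for k=4: for b ∈ [1/2,2] : -3/4 ≤ (2-b)^4/4 - 1/b
theorem k4bracket (b : ℝ) (h1 : 1/2 ≤ b) (h2 : b ≤ 2) : -(3/4) ≤ (2-b)^4/4 - 1/b := by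
  have hb0 : (0:ℝ) < b := by linarith
  have hN := k4brN b h1 h2
  have e : (2-b)^4/4 - 1/b - (-(3/4)) = (b*(2-b)^4 + 3*b - 4)/(4*b) := by
    field_simp
    ring
  linarith [e ▸ div_nonneg hN (by linarith : (0:ℝ) ≤ 4*b)]

theorem L5_3 (b c d : ℝ) (hb : 0 < b) (hc : 0 < c) (hd : 0 < d) :
    4 ≤ b*c*d + (1/b + 1/c + 1/d) := by
  have := prod_add_inv_sum (Finset.univ : Finset (Fin 3)) ![b,c,d]
    (by intro i _; fin_cases i <;> simpa)
  rw [Fin.prod_univ_three, Fin.sum_univ_three] at this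
  simp only [Matrix.cons_val_zero, Matrix.cons_val_one, Matrix.head_cons,
    Matrix.cons_val_two, Matrix.tail_cons, Finset.card_univ, Fintype.card_fin] at this
  rw [one_div, one_div, one_div]
  push_cast at this
  linarith

theorem L5_4 (a b c d : ℝ) (ha : 0 < a) (hb : 0 < b) (hc : 0 < c) (hd : 0 < d) :
    5 ≤ a*b*c*d + (1/a + 1/b + 1/c + 1/d) := by
  have := prod_add_inv_sum (Finset.univ : Finset (Fin 4)) ![a,b,c,d]
    (by intro i _; fin_cases i <;> simpa)
  rw [Fin.prod_univ_four, Fin.sum_univ_four] at this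
  simp only [Matrix.cons_val_zero, Matrix.cons_val_one, Matrix.head_cons,
    Matrix.cons_val_two, Matrix.tail_cons, Matrix.cons_val_three, Finset.card_univ, Fintype.card_fin] at this
  rw [one_div, one_div, one_div, one_div]
  push_cast at this
  linarith

-- C0 : all four b's in (1/2, 2]
theorem k4C0 (B1 B2 B3 B4 : ℝ) (h1 : 1/2 ≤ B1) (h1' : B1 ≤ 2) (h2 : 1/2 ≤ B2) (h2' : B2 ≤ 2)
    (h3 : 1/2 ≤ B3) (h3' : B3 ≤ 2) (h4 : 1/2 ≤ B4) (h4' : B4 ≤ 2) :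
    2 ≤ B1*B2*B3*B4 + (1/4)*((2-B1)^4 + (2-B2)^4 + (2-B3)^4 + (2-B4)^4) := by
  have hL := L5_4 B1 B2 B3 B4 (by linarith) (by linarith) (by linarith) (by linarith)
  have e1 := k4bracket B1 h1 h1'
  have e2 := k4bracket B2 h2 h2'
  have e3 := k4bracket B3 h3 h3'
  have e4 := k4bracket B4 h4 h4'
  linarith

-- C1 : Bj ∈ [3/10, 1/2], others in (1/2, 2]
theorem k4C1 (A B1 B2 B3 : ℝ) (hA : 3/10 ≤ A) (hA' : A ≤ 1/2)
    (h1 : 1/2 ≤ B1) (h1' : B1 ≤ 2) (h2 : 1/2 ≤ B2) (h2' : B2 ≤ 2) (h3 : 1/2 ≤ B3) (h3' : B3 ≤ 2) :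
    2 ≤ A*B1*B2*B3 + (1/4)*((2-A)^4 + (2-B1)^4 + (2-B2)^4 + (2-B3)^4) := by
  have hA0 : (0:ℝ) < A := by linarith
  have hL := L5_3 B1 B2 B3 (by linarith) (by linarith) (by linarith)
  have hprod : A*(4 - (1/B1 + 1/B2 + 1/B3)) ≤ A*(B1*B2*B3) := by
    apply mul_le_mul_of_nonneg_left _ (le_of_lt hA0)
    linarith
  -- per-other: A/Bi ≤ (2-Bi)^4/4 + 1/3
  have hrho : ∀ b : ℝ, 1/2 ≤ b → b ≤ 2 → A/b ≤ (2-b)^4/4 + 1/3 := by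
    intro b hb hb'
    have hb0 : (0:ℝ) < b := by linarith
    have step1 : A/b ≤ (1/2)/b := by
      apply div_le_div_of_nonneg_right hA' hb0.le

    have hr := k4rho b hb hb'
    have e : ((2-b)^4/4 + 1/3) - (1/2)/b = (3*b*(2-b)^4 + 4*b - 6)/(12*b) := by
      field_simp
      ring
    have := div_nonneg hr (by linarith : (0:ℝ) ≤ 12*b)
    linarith [e ▸ this]
  have r1 := hrho B1 h1 h1'
  have r2 := hrho B2 h2 h2'
  have r3 := hrho B3 h3 h3'
  have haux := k4aux A
  -- combine: A*B1B2B3 ≥ 4A - A*H' ; and -A/Bi ≥ -(2-Bi)^4/4 - 1/3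
  have expand : A*(4 - (1/B1 + 1/B2 + 1/B3)) = 4*A - A/B1 - A/B2 - A/B3 := by
    field_simp
    ring
  nlinarith [hprod, r1, r2, r3, haux, expand]

-- one small coordinate, three large
theorem k4one (a b c d : ℝ) (ha0 : 0 ≤ a) (ha : a ≤ 1/4)
    (hb : 1/4 < b) (hb1 : b ≤ 1) (hc : 1/4 < c) (hc1 : c ≤ 1) (hd : 1/4 < d) (hd1 : d ≤ 1) :
    2 ≤ (2*a)*(2*b)*(2*c)*(2*d) + (1/4)*((2-2*a)^4+(2-2*b)^4+(2-2*c)^4+(2-2*d)^4) := by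
  by_cases hA : a ≤ 3/20
  · have hpow : (17/10:ℝ)^4 ≤ (2-2*a)^4 := pow_le_pow_left₀ (by norm_num) (by linarith) 4
    have hprod : (0:ℝ) ≤ (2*a)*(2*b)*(2*c)*(2*d) := by
      apply mul_nonneg (mul_nonneg (mul_nonneg (by linarith) (by linarith)) (by linarith)) (by linarith)
    have p2 : (0:ℝ) ≤ (2-2*b)^4 := by positivity
    have p3 : (0:ℝ) ≤ (2-2*c)^4 := by positivity
    have p4 : (0:ℝ) ≤ (2-2*d)^4 := by positivity
    nlinarith [hpow]
  · have := k4C1 (2*a) (2*b) (2*c) (2*d) (by linarith) (by linarith)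
      (by linarith) (by linarith) (by linarith) (by linarith) (by linarith) (by linarith)
    linarith

-- two small coordinates: generic bound
theorem k4two (p q prod R : ℝ) (hp : p ≤ 1/4) (hp0 : 0 ≤ p) (hq : q ≤ 1/4) (hq0 : 0 ≤ q)
    (hprod : 0 ≤ prod) (hR : 0 ≤ R) :
    2 ≤ prod + (1/4)*((2-2*p)^4 + (2-2*q)^4 + R) := by
  have e1 : (3/2:ℝ)^4 ≤ (2-2*p)^4 := pow_le_pow_left₀ (by norm_num) (by linarith) 4
  have e2 : (3/2:ℝ)^4 ≤ (2-2*q)^4 := pow_le_pow_left₀ (by norm_num) (by linarith) 4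
  nlinarith [e1, e2]

theorem key4 (x : Fin 4 → ℝ) (hx : ∀ i, x i ∈ Set.Icc (0 : ℝ) 1) :
    (2:ℝ) ≤ (∏ i, (2*x i)) + (1/(4:ℝ)) * ∑ i, (2-2*x i)^4 := by
  obtain ⟨g0, g0'⟩ := hx 0
  obtain ⟨g1, g1'⟩ := hx 1
  obtain ⟨g2, g2'⟩ := hx 2
  obtain ⟨g3, g3'⟩ := hx 3
  rw [Fin.prod_univ_four, Fin.sum_univ_four]
  have hP : (0:ℝ) ≤ (2*x 0)*(2*x 1)*(2*x 2)*(2*x 3) := by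
    apply mul_nonneg (mul_nonneg (mul_nonneg (by linarith) (by linarith)) (by linarith)) (by linarith)
  have q0 : (0:ℝ) ≤ (2-2*x 0)^4 := by positivity
  have q1 : (0:ℝ) ≤ (2-2*x 1)^4 := by positivity
  have q2 : (0:ℝ) ≤ (2-2*x 2)^4 := by positivity
  have q3 : (0:ℝ) ≤ (2-2*x 3)^4 := by positivity
  by_cases c0 : x 0 ≤ 1/4 <;> by_cases c1 : x 1 ≤ 1/4 <;> by_cases c2 : x 2 ≤ 1/4 <;> by_cases c3 : x 3 ≤ 1/4
  · linarith [k4two (x 0) (x 1) ((2*x 0)*(2*x 1)*(2*x 2)*(2*x 3)) ((2-2*x 2)^4 + (2-2*x 3)^4) c0 g0 c1 g1 hP (by linarith)]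
  · linarith [k4two (x 0) (x 1) ((2*x 0)*(2*x 1)*(2*x 2)*(2*x 3)) ((2-2*x 2)^4 + (2-2*x 3)^4) c0 g0 c1 g1 hP (by linarith)]
  · linarith [k4two (x 0) (x 1) ((2*x 0)*(2*x 1)*(2*x 2)*(2*x 3)) ((2-2*x 2)^4 + (2-2*x 3)^4) c0 g0 c1 g1 hP (by linarith)]
  · linarith [k4two (x 0) (x 1) ((2*x 0)*(2*x 1)*(2*x 2)*(2*x 3)) ((2-2*x 2)^4 + (2-2*x 3)^4) c0 g0 c1 g1 hP (by linarith)]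
  · linarith [k4two (x 0) (x 2) ((2*x 0)*(2*x 1)*(2*x 2)*(2*x 3)) ((2-2*x 1)^4 + (2-2*x 3)^4) c0 g0 c2 g2 hP (by linarith)]
  · linarith [k4two (x 0) (x 2) ((2*x 0)*(2*x 1)*(2*x 2)*(2*x 3)) ((2-2*x 1)^4 + (2-2*x 3)^4) c0 g0 c2 g2 hP (by linarith)]
  · linarith [k4two (x 0) (x 3) ((2*x 0)*(2*x 1)*(2*x 2)*(2*x 3)) ((2-2*x 1)^4 + (2-2*x 2)^4) c0 g0 c3 g3 hP (by linarith)]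
  · push_neg at c1 c2 c3
    linarith [k4one (x 0) (x 1) (x 2) (x 3) g0 c0 c1 g1' c2 g2' c3 g3']
  · linarith [k4two (x 1) (x 2) ((2*x 0)*(2*x 1)*(2*x 2)*(2*x 3)) ((2-2*x 0)^4 + (2-2*x 3)^4) c1 g1 c2 g2 hP (by linarith)]
  · linarith [k4two (x 1) (x 2) ((2*x 0)*(2*x 1)*(2*x 2)*(2*x 3)) ((2-2*x 0)^4 + (2-2*x 3)^4) c1 g1 c2 g2 hP (by linarith)]
  · linarith [k4two (x 1) (x 3) ((2*x 0)*(2*x 1)*(2*x 2)*(2*x 3)) ((2-2*x 0)^4 + (2-2*x 2)^4) c1 g1 c3 g3 hP (by linarith)]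
  · push_neg at c0 c2 c3
    linarith [k4one (x 1) (x 0) (x 2) (x 3) g1 c1 c0 g0' c2 g2' c3 g3']
  · linarith [k4two (x 2) (x 3) ((2*x 0)*(2*x 1)*(2*x 2)*(2*x 3)) ((2-2*x 0)^4 + (2-2*x 1)^4) c2 g2 c3 g3 hP (by linarith)]
  · push_neg at c0 c1 c3
    linarith [k4one (x 2) (x 0) (x 1) (x 3) g2 c2 c0 g0' c1 g1' c3 g3']
  · push_neg at c0 c1 c2
    linarith [k4one (x 3) (x 0) (x 1) (x 2) g3 c3 c0 g0' c1 g1' c2 g2']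
  · push_neg at c0 c1 c2 c3
    have := k4C0 (2*x 0) (2*x 1) (2*x 2) (2*x 3) (by linarith) (by linarith) (by linarith) (by linarith)
      (by linarith) (by linarith) (by linarith) (by linarith)
    linarith

/-- For any `x₁, …, x_k ∈ [0,1]`,
`∏ xᵢ + (1/k) ∑ (1 − xᵢ)^k ≥ 2^(1−k)`. -/
theorem xi_inequality (k : ℕ) (hk : 1 ≤ k) (x : Fin k → ℝ)
    (hx : ∀ i, x i ∈ Set.Icc (0 : ℝ) 1) :
    (2 : ℝ) ^ (1 - (k : ℤ)) ≤ ∏ i, x i + (1 / (k : ℝ)) * ∑ i, (1 - x i) ^ k := by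
  have key : (2:ℝ) ≤ (∏ i, (2*x i)) + (1/(k:ℝ)) * ∑ i, (2-2*x i)^k := by
    rcases Nat.lt_or_ge k 5 with hsmall | hbig
    · interval_cases k
      · -- k = 1
        have h0 := hx 0
        simp only [Fin.prod_univ_one, Fin.sum_univ_one, Nat.cast_one, pow_one]
        norm_num
      · -- k = 2
        have h0 := hx 0; have h1 := hx 1
        simp only [Set.mem_Icc] at h0 h1
        rw [Fin.prod_univ_two, Fin.sum_univ_two]
        push_cast
        nlinarith [sq_nonneg (x 0 + x 1 - 1)]
      · exact key3 x hx
      · exact key4 x hx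
    · exact key_big k hbig x hx
  -- conversion
  have h2k : (0:ℝ) < (2:ℝ)^k := by positivity
  have ep : (∏ i, (2*x i)) = 2^k * ∏ i, x i := by
    rw [Finset.prod_mul_distrib, Finset.prod_const, Finset.card_univ, Fintype.card_fin]
  have es : (∑ i, (2-2*x i)^k) = 2^k * ∑ i, (1-x i)^k := by
    rw [Finset.mul_sum]
    apply Finset.sum_congr rfl
    intro i _
    rw [show (2-2*x i) = 2*(1-x i) by ring, mul_pow]
  rw [ep, es] at key
  have e2 : (2:ℝ)^(1-(k:ℤ)) = 2 / 2^k := by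
    rw [zpow_sub₀ (by norm_num : (2:ℝ) ≠ 0), zpow_one, zpow_natCast]
  rw [e2, div_le_iff₀ h2k]
  calc (2:ℝ) ≤ 2^k * ∏ i, x i + 1/(k:ℝ) * (2^k * ∑ i, (1-x i)^k) := key
    _ = (∏ i, x i + 1/(k:ℝ) * ∑ i, (1-x i)^k) * 2^k := by ring
end

section
/- Let k ≥ 2 be an integer. Fix 0 < β ≤ 1/2, 0 < γ < 1/5, and 0 < λ < 1/(12k), and set β' = β/(1 − 2kλ) and ρ = (γ/2)^{1 − ln(1−β')/γ}. Fix 0 < η < ρ/2^{2k²}. Suppose that, in a red/blue coloring of a complete graph, A is a vertex set that is η-regular (with itself) with internal red density at least 1/3, and B is a vertex set disjoint from A with |B| ≥ γ^{−3}. Then either there is a red copy of K_k inside A all of whose vertices have at least β|B| common red neighbors in B (i.e., a red book B^(k)_{⌈β|B|⌉} with spine in A and pages in B), or there are subsets A' ⊆ A and B' ⊆ B such that |A'| ≥ ρ|A|, |B'| ≥ (1−γ)(1−β')^{1+γ}|B|, and the pair (A', B') is lower-(λ,γ)-regular in the blue graph. -/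
/-- Density of color-`c` edges between `X` and `Y`. -/
noncomputable def colorDens {N : ℕ} (χ : Fin N → Fin N → Bool) (c : Bool)
    (X Y : Finset (Fin N)) : ℝ :=
  (colorCount χ c X Y : ℝ) / ((X.card : ℝ) * (Y.card : ℝ))

/-- The pair `(X, Y)` (not necessarily disjoint) is `ε`-regular with respect to the red
graph of the coloring `χ` (equivalently, the blue graph). -/
def RegularPair {N : ℕ} (χ : Fin N → Fin N → Bool) (ε : ℝ) (X Y : Finset (Fin N)) : Prop :=
  ∀ X' ⊆ X, ∀ Y' ⊆ Y, ε * (X.card : ℝ) ≤ (X'.card : ℝ) → ε * (Y.card : ℝ) ≤ (Y'.card : ℝ) →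
    |colorDens χ false X Y - colorDens χ false X' Y'| ≤ ε

/-- The pair `(X, Y)` is lower-`(lam, γ)`-regular in color `c`: every pair of subsets of
proportion at least `γ` has color-`c` density at least `lam`. -/
def LowerReg {N : ℕ} (χ : Fin N → Fin N → Bool) (c : Bool) (lam γ : ℝ)
    (X Y : Finset (Fin N)) : Prop :=
  ∀ X' ⊆ X, ∀ Y' ⊆ Y, γ * (X.card : ℝ) ≤ (X'.card : ℝ) → γ * (Y.card : ℝ) ≤ (Y'.card : ℝ) →
    lam ≤ colorDens χ c X' Y'

lemma colorCount_eq_sum {N : ℕ} (χ : Fin N → Fin N → Bool) (c : Bool) (X Y : Finset (Fin N)) :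
    colorCount χ c X Y = ∑ x ∈ X, (Y.filter fun y => x ≠ y ∧ χ x y = c).card := by
  classical
  have h1 : {p : Fin N × Fin N | p.1 ∈ X ∧ p.2 ∈ Y ∧ p.1 ≠ p.2 ∧ χ p.1 p.2 = c}
      = ↑((X ×ˢ Y).filter fun p => p.1 ≠ p.2 ∧ χ p.1 p.2 = c) := by
    ext ⟨a, b⟩
    simp [Finset.mem_product, and_assoc]
  rw [colorCount, h1, Set.ncard_coe_finset, Finset.card_filter, Finset.sum_product]
  congr 1
  ext x
  rw [Finset.card_filter]

lemma exists_high_deg {N : ℕ} (χ : Fin N → Fin N → Bool) (X : Finset (Fin N))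
    (hne : X.Nonempty) (d : ℝ)
    (hcount : d * X.card * X.card ≤ (colorCount χ false X X : ℝ)) :
    ∃ v ∈ X, d * X.card ≤ ((X.filter fun u => v ≠ u ∧ χ v u = false).card : ℝ) := by
  by_contra hcon
  push_neg at hcon
  have hsum : (colorCount χ false X X : ℝ)
      = ∑ x ∈ X, ((X.filter fun y => x ≠ y ∧ χ x y = false).card : ℝ) := by
    rw [colorCount_eq_sum]; push_cast; ring
  have hlt : ∑ x ∈ X, ((X.filter fun y => x ≠ y ∧ χ x y = false).card : ℝ)
      < ∑ _x ∈ X, d * X.card :=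
    Finset.sum_lt_sum_of_nonempty hne fun v hv => hcon v hv
  rw [Finset.sum_const, nsmul_eq_mul] at hlt
  rw [hsum] at hcount
  nlinarith

lemma embed_red_clique {N : ℕ} (χ : Fin N → Fin N → Bool) (hsym : ∀ u v, χ u v = χ v u)
    (A : Finset (Fin N)) (η : ℝ)
    (hreg : RegularPair χ η A A) (hdens : 1 / 3 ≤ colorDens χ false A A)
    (hη0 : 0 < η) (hη12 : η ≤ 1 / 12) (hηA : 1 < η * A.card) :
    ∀ j : ℕ, ∀ X : Finset (Fin N), X ⊆ A → (4 : ℝ) ^ j * (η * A.card) ≤ X.card →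
      ∃ S : Finset (Fin N), S ⊆ X ∧ S.card = j ∧ IsMonoOn χ S false := by
  intro j
  induction j with
  | zero =>
    intro X _ _
    exact ⟨∅, Finset.empty_subset _, Finset.card_empty, by intro u hu; simp at hu⟩
  | succ j ih =>
    intro X hXA hXcard
    have hηA0 : (0 : ℝ) < η * A.card := by linarith
    have h4j : (1 : ℝ) ≤ (4 : ℝ) ^ (j + 1) := one_le_pow₀ (by norm_num)
    have hXbig : η * A.card ≤ X.card := by nlinarith
    have hXpos : (0 : ℝ) < X.card := by nlinarith
    have hXne : X.Nonempty := by
      rw [← Finset.card_pos]; exact_mod_cast hXpos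
    -- density of X within itself
    have hregX := hreg X hXA X hXA hXbig hXbig
    have hdX : 1 / 3 - η ≤ colorDens χ false X X := by
      have := abs_le.mp hregX
      linarith [this.2]
    have hcount : (1 / 3 - η) * X.card * X.card ≤ (colorCount χ false X X : ℝ) := by
      rw [colorDens] at hdX
      rw [le_div_iff₀ (by positivity)] at hdX
      nlinarith
    obtain ⟨v, hvX, hvdeg⟩ := exists_high_deg χ X hXne _ hcount
    set X' : Finset (Fin N) := X.filter fun u => v ≠ u ∧ χ v u = false with hX'
    have hX'sub : X' ⊆ X := Finset.filter_subset _ _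
    have hX'card : (4 : ℝ) ^ j * (η * A.card) ≤ X'.card := by
      have h1 : (1 / 3 - η) * X.card ≤ X'.card := hvdeg
      have h2 : (4 : ℝ) ^ (j + 1) = 4 * 4 ^ j := by ring
      nlinarith [pow_pos (show (0:ℝ) < 4 by norm_num) j]
    obtain ⟨S', hS'sub, hS'card, hS'mono⟩ := ih X' (hX'sub.trans hXA) hX'card
    have hvnot : v ∉ S' := by
      intro hv
      have := hS'sub hv
      rw [hX', Finset.mem_filter] at this
      exact this.2.1 rfl
    refine ⟨insert v S', ?_, ?_, ?_⟩
    · intro u hu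
      rcases Finset.mem_insert.mp hu with h | h
      · exact h ▸ hvX
      · exact hX'sub (hS'sub h)
    · rw [Finset.card_insert_of_notMem hvnot, hS'card]
    · intro u hu w hw huw
      rcases Finset.mem_insert.mp hu with h | h <;> rcases Finset.mem_insert.mp hw with h' | h'
      · exact absurd (h.trans h'.symm) huw
      · have := hS'sub h'
        rw [hX', Finset.mem_filter] at this
        rw [h]; exact this.2.2
      · have := hS'sub h
        rw [hX', Finset.mem_filter] at this
        rw [h', hsym]; exact this.2.2
      · exact hS'mono u h w h' huw

set_option maxHeartbeats 1000000 in
/-- Given an `η`-regular set `A` of red density at least `1/3` and a disjoint set `B`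
with `|B| ≥ γ⁻³`, either there is a red `K_k` in `A` with at least `β|B|` common red
neighbors in `B`, or there are large subsets `A' ⊆ A`, `B' ⊆ B` with `(A', B')`
lower-`(λ, γ)`-regular in blue. -/
theorem lower_regular_or_red_book (N k : ℕ) (hk : 2 ≤ k)
    (χ : Fin N → Fin N → Bool) (hsym : ∀ u v, χ u v = χ v u)
    (β γ lam β' ρ η : ℝ)
    (hβ0 : 0 < β) (hβ1 : β ≤ 1 / 2)
    (hγ0 : 0 < γ) (hγ1 : γ < 1 / 5)
    (hlam0 : 0 < lam) (hlam1 : lam < 1 / (12 * (k : ℝ)))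
    (hβ' : β' = β / (1 - 2 * (k : ℝ) * lam))
    (hρ : ρ = (γ / 2) ^ ((1 : ℝ) - Real.log (1 - β') / γ))
    (hη0 : 0 < η) (hη1 : η < ρ / 2 ^ (2 * k ^ 2))
    (A B : Finset (Fin N)) (hAB : Disjoint A B)
    (hAreg : RegularPair χ η A A)
    (hAdens : 1 / 3 ≤ colorDens χ false A A)
    (hB : (γ⁻¹) ^ (3 : ℕ) ≤ (B.card : ℝ)) :
    (∃ S : Finset (Fin N), S ⊆ A ∧ S.card = k ∧ IsMonoOn χ S false ∧
        β * (B.card : ℝ) ≤ ({v : Fin N | v ∈ B ∧ ∀ u ∈ S, χ v u = false}.ncard : ℝ)) ∨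
    (∃ A' B' : Finset (Fin N), A' ⊆ A ∧ B' ⊆ B ∧
        ρ * (A.card : ℝ) ≤ (A'.card : ℝ) ∧
        (1 - γ) * (1 - β') ^ ((1 : ℝ) + γ) * (B.card : ℝ) ≤ (B'.card : ℝ) ∧
        LowerReg χ true lam γ A' B') := by
  classical
  -- ### parameter facts
  have hkR : (2:ℝ) ≤ (k:ℝ) := by exact_mod_cast hk
  have hk0 : (0:ℝ) < (k:ℝ) := by linarith
  have hlamk : 2 * (k:ℝ) * lam < 1/6 := by
    rw [lt_div_iff₀ (by positivity)] at hlam1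
    nlinarith
  have h2kl : (0:ℝ) < 1 - 2*(k:ℝ)*lam := by linarith
  have h2kl' : (5:ℝ)/6 ≤ 1 - 2*(k:ℝ)*lam := by linarith
  have hβ'0 : 0 < β' := by rw [hβ']; positivity
  have hβ'35 : β' ≤ 3/5 := by
    rw [hβ', div_le_iff₀ h2kl]; nlinarith
  have h1β'0 : (0:ℝ) < 1 - β' := by linarith
  obtain ⟨L, hL⟩ : ∃ L : ℝ, L = -Real.log (1 - β') := ⟨_, rfl⟩
  have hL0 : 0 ≤ L := by
    rw [hL, neg_nonneg]
    exact Real.log_nonpos (by linarith) (by linarith)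
  have hγ2 : (0:ℝ) < γ/2 := by linarith
  have hγ21 : γ/2 ≤ 1 := by linarith
  have hρ' : ρ = (γ/2) ^ ((1:ℝ) + L/γ) := by
    rw [hρ]; congr 1; rw [hL]; ring
  have hρ0 : 0 < ρ := by
    rw [hρ']; exact Real.rpow_pos_of_pos hγ2 _
  have hρ1 : ρ ≤ 1 := by
    rw [hρ']
    exact Real.rpow_le_one (le_of_lt hγ2) (by linarith) (by positivity)
  have h2k2 : (256:ℝ) ≤ 2 ^ (2*k^2) := by
    calc (256:ℝ) = 2^(8:ℕ) := by norm_num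
    _ ≤ 2^(2*k^2) := by
        apply pow_le_pow_right₀ (by norm_num : (1:ℝ) ≤ 2)
        calc 8 = 2*2^2 := rfl
        _ ≤ 2*k^2 := by gcongr
  have hη256 : η < 1/256 := by
    have h1 : ρ / 2^(2*k^2) ≤ 1/256 :=
      div_le_div₀ zero_le_one hρ1 (by norm_num) h2k2
    linarith
  have hBpos : (0:ℝ) < B.card := by
    have : (0:ℝ) < (γ⁻¹)^(3:ℕ) := by positivity
    linarith
  have hAne : A.Nonempty := by
    by_contra h
    rw [Finset.not_nonempty_iff_eq_empty] at h
    rw [h] at hAdens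
    norm_num [colorDens] at hAdens
  have hηA : 1 < η * A.card := by
    by_contra h
    push_neg at h
    obtain ⟨u, hu⟩ := hAne
    have hsub : {u} ⊆ A := Finset.singleton_subset_iff.mpr hu
    have hcard : η * A.card ≤ (({u} : Finset (Fin N)).card : ℝ) := by
      simpa using h
    have hreg := hAreg {u} hsub {u} hsub hcard hcard
    have hzero : colorDens χ false {u} {u} = 0 := by
      have hc : colorCount χ false {u} {u} = 0 := by
        rw [colorCount_eq_sum]; simp [Finset.filter_singleton]
      simp [colorDens, hc]
    rw [hzero, sub_zero] at hreg
    have := abs_le.mp hreg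
    linarith [this.2]
  have hApos : (0:ℝ) < A.card := by nlinarith
  have hBsplit : ∀ Bi : Finset (Fin N), Bi ⊆ B → ((B \ Bi).card : ℝ) + Bi.card = B.card := by
    intro Bi h
    exact_mod_cast Finset.card_sdiff_add_card_eq_card h
  have key : ∀ i : ℕ,
      ((∃ S : Finset (Fin N), S ⊆ A ∧ S.card = k ∧ IsMonoOn χ S false ∧
        β * (B.card : ℝ) ≤ ({v : Fin N | v ∈ B ∧ ∀ u ∈ S, χ v u = false}.ncard : ℝ)) ∨
      (∃ A' B' : Finset (Fin N), A' ⊆ A ∧ B' ⊆ B ∧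
        ρ * (A.card : ℝ) ≤ (A'.card : ℝ) ∧
        (1 - γ) * (1 - β') ^ ((1 : ℝ) + γ) * (B.card : ℝ) ≤ (B'.card : ℝ) ∧
        LowerReg χ true lam γ A' B')) ∨
      (∃ Ai Bi : Finset (Fin N), Ai ⊆ A ∧ Bi ⊆ B ∧
        (γ/2)^i * (A.card:ℝ) ≤ (Ai.card:ℝ) ∧
        ((B \ Bi).card : ℝ) < β' * B.card ∧
        ((Bi.card:ℝ) ≤ (1-γ)^i * B.card) ∧
        (∀ v ∈ Ai, (((B \ Bi).filter fun u => χ v u = true).card : ℝ)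
            ≤ 2*lam*((B \ Bi).card))) := by
    intro i
    induction i with
    | zero =>
      right
      refine ⟨A, B, Finset.Subset.refl _, Finset.Subset.refl _, by simp, ?_, by simp, ?_⟩
      · simp only [Finset.sdiff_self, Finset.card_empty, Nat.cast_zero]
        exact mul_pos hβ'0 hBpos
      · intro v _
        simp [Finset.sdiff_self]
    | succ i ih =>
      rcases ih with hgoal | ⟨Ai, Bi, hAiA, hBiB, hAicard, hBd, hBup, hdeginv⟩
      · exact Or.inl hgoal
      have hγ2i : (0:ℝ) < (γ/2)^i := pow_pos hγ2 i
      have hAipos : (0:ℝ) < Ai.card := lt_of_lt_of_le (by positivity) hAicard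
      have hBisum : ((B \ Bi).card:ℝ) + Bi.card = B.card := hBsplit Bi hBiB
      have hBibig : (1 - β') * B.card < (Bi.card : ℝ) := by
        have : (1-β') * B.card = B.card - β' * B.card := by ring
        linarith
      have hBipos : (0:ℝ) < Bi.card := by
        have := mul_pos h1β'0 hBpos
        linarith
      have hiγL : (i:ℝ) * γ < L := by
        have h1 : (1:ℝ) - β' < (1-γ)^i :=
          (mul_lt_mul_iff_left₀ hBpos).mp (by linarith)
        have h2 : Real.log (1 - β') < Real.log ((1-γ)^i) := Real.log_lt_log h1β'0 h1
        rw [Real.log_pow] at h2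
        have h3 : Real.log (1-γ) ≤ -γ := by
          have := Real.log_le_sub_one_of_pos (show (0:ℝ) < 1-γ by linarith)
          linarith
        have h4 : (i:ℝ) * Real.log (1-γ) ≤ (i:ℝ) * (-γ) :=
          mul_le_mul_of_nonneg_left h3 (Nat.cast_nonneg i)
        rw [hL]
        linarith [h2, h4]
      have hρi : ρ ≤ (γ/2)^(i+1) := by
        have he : ((i:ℝ)+1) ≤ 1 + L/γ := by
          have : (i:ℝ) ≤ L/γ := le_of_lt ((lt_div_iff₀ hγ0).mpr hiγL)
          linarith
        have hcast : ((i:ℝ)+1) = (((i+1 : ℕ)) : ℝ) := by push_cast; ring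
        calc ρ = (γ/2) ^ ((1:ℝ) + L/γ) := hρ'
        _ ≤ (γ/2) ^ ((i:ℝ)+1) := Real.rpow_le_rpow_of_exponent_ge hγ2 hγ21 he
        _ = (γ/2)^(i+1) := by rw [hcast, Real.rpow_natCast]
      by_cases hlr : LowerReg χ true lam γ Ai Bi
      · refine Or.inl (Or.inr ⟨Ai, Bi, hAiA, hBiB, ?_, ?_, hlr⟩)
        · have h1 : ((γ:ℝ)/2)^(i+1) ≤ (γ/2)^i := by
            rw [pow_succ]
            nlinarith [hγ2i]
          have h2 := mul_le_mul_of_nonneg_right (le_trans hρi h1) hApos.le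
          linarith
        · have hpow0 : (0:ℝ) ≤ (1-β') ^ ((1:ℝ)+γ) := Real.rpow_nonneg (le_of_lt h1β'0) _
          have hpow : (1 - β') ^ ((1:ℝ)+γ) ≤ (1-β') := by
            calc (1-β') ^ ((1:ℝ)+γ) = (1-β') * (1-β')^(γ:ℝ) := by
                  rw [Real.rpow_add h1β'0, Real.rpow_one]
            _ ≤ (1-β') * 1 := by
                  exact mul_le_mul_of_nonneg_left
                    (Real.rpow_le_one (le_of_lt h1β'0) (by linarith) (le_of_lt hγ0))
                    (le_of_lt h1β'0)
            _ = 1-β' := mul_one _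
          nlinarith [mul_le_mul_of_nonneg_right hpow hBpos.le,
            mul_nonneg hpow0 hBpos.le, hBibig, hγ0, hγ1]
      · rw [LowerReg] at hlr
        push_neg at hlr
        obtain ⟨X', hX'Ai, Y', hY'Bi, hc1, hc2, hdlt⟩ := hlr
        have hX'A : X' ⊆ A := hX'Ai.trans hAiA
        have hY'B : Y' ⊆ B := hY'Bi.trans hBiB
        have hX'pos : (0:ℝ) < X'.card := lt_of_lt_of_le (mul_pos hγ0 hAipos) hc1
        have hY'pos : (0:ℝ) < Y'.card := lt_of_lt_of_le (mul_pos hγ0 hBipos) hc2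
        have hcount : (colorCount χ true X' Y' : ℝ) < lam * ((X'.card:ℝ) * Y'.card) := by
          rw [colorDens, div_lt_iff₀ (by positivity)] at hdlt
          linarith only [hdlt]
        have hne_xy : ∀ x ∈ X', ∀ y ∈ Y', x ≠ y := by
          intro x hx y hy h
          exact Finset.disjoint_left.mp hAB (hX'A hx) (h ▸ hY'B hy)
        have hsumdegN : colorCount χ true X' Y'
            = ∑ x ∈ X', (Y'.filter fun y => χ x y = true).card := by
          rw [colorCount_eq_sum]
          refine Finset.sum_congr rfl fun x hx => ?_
          congr 1
          exact Finset.filter_congr fun y hy => by simp [hne_xy x hx y hy]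
        have hsum_lt : ∑ v ∈ X', ((Y'.filter fun y => χ v y = true).card:ℝ)
            < lam * ((X'.card:ℝ) * Y'.card) := by
          have h0 : ((∑ x ∈ X', (Y'.filter fun y => χ x y = true).card : ℕ) : ℝ)
              < lam * ((X'.card:ℝ) * Y'.card) := by
            rw [← hsumdegN]; exact hcount
          push_cast at h0
          exact h0
        obtain ⟨X₁, hX₁def⟩ : ∃ X₁, X₁ = X'.filter
            (fun v => ((Y'.filter fun y => χ v y = true).card : ℝ) ≤ 2*lam*Y'.card) := ⟨_, rfl⟩
        have hX₁sub : X₁ ⊆ X' := hX₁def ▸ Finset.filter_subset _ _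
        have hX₁mem : ∀ v ∈ X₁, ((Y'.filter fun y => χ v y = true).card : ℝ) ≤ 2*lam*Y'.card := by
          intro v hv
          rw [hX₁def, Finset.mem_filter] at hv
          exact hv.2
        have hsplitX : (X₁.card : ℝ) + ((X'.filter (fun v =>
            ¬ ((Y'.filter fun y => χ v y = true).card : ℝ) ≤ 2*lam*Y'.card)).card : ℝ)
            = X'.card := by
          rw [hX₁def]
          exact_mod_cast Finset.card_filter_add_card_filter_not _
        have hbound : ∀ v ∈ X'.filter (fun v =>
            ¬ ((Y'.filter fun y => χ v y = true).card : ℝ) ≤ 2*lam*Y'.card),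
            2*lam*(Y'.card:ℝ) ≤ ((Y'.filter fun y => χ v y = true).card : ℝ) := by
          intro v hv
          exact (not_le.mp (Finset.mem_filter.mp hv).2).le
        have hsum2 := Finset.card_nsmul_le_sum _ _ _ hbound
        rw [nsmul_eq_mul] at hsum2
        have hsum3 : ∑ v ∈ (X'.filter (fun v =>
              ¬ ((Y'.filter fun y => χ v y = true).card : ℝ) ≤ 2*lam*Y'.card)),
              ((Y'.filter fun y => χ v y = true).card:ℝ)
            ≤ ∑ v ∈ X', ((Y'.filter fun y => χ v y = true).card:ℝ) :=
          Finset.sum_le_sum_of_subset_of_nonneg (Finset.filter_subset _ _)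
            (fun _ _ _ => by positivity)
        have hscard : 2 * (((X'.filter (fun v =>
            ¬ ((Y'.filter fun y => χ v y = true).card : ℝ) ≤ 2*lam*Y'.card)).card : ℝ))
            < X'.card := by
          by_contra hcon
          have hcon' := not_lt.mp hcon
          have hm : (0:ℝ) ≤ lam * Y'.card := (mul_pos hlam0 hY'pos).le
          have h5 := mul_le_mul_of_nonneg_right hcon' hm
          linarith only [hsum2, hsum3, hsum_lt, h5]
        have hX₁card : (γ/2)^(i+1) * (A.card:ℝ) ≤ X₁.card := by
          have hps : ((γ:ℝ)/2)^(i+1) * A.card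
              = (γ * ((γ/2)^i * A.card))/2 := by rw [pow_succ]; ring
          have h1 : γ * ((γ/2)^i * (A.card:ℝ)) ≤ γ * Ai.card :=
            mul_le_mul_of_nonneg_left hAicard hγ0.le
          linarith only [hps, h1, hscard, hsplitX, hc1]
        by_cases hbig : β' * B.card ≤ ((B \ Bi).card : ℝ) + Y'.card
        · -- found the red book
          have hdisj : Disjoint (B \ Bi) Y' :=
            Finset.disjoint_left.mpr fun b hb hbY => (Finset.mem_sdiff.mp hb).2 (hY'Bi hbY)
          have hPB : (B \ Bi) ∪ Y' ⊆ B :=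
            Finset.union_subset Finset.sdiff_subset hY'B
          have hPcard : (((B \ Bi) ∪ Y').card : ℝ) = ((B \ Bi).card : ℝ) + Y'.card := by
            rw [Finset.card_union_of_disjoint hdisj]
            push_cast
            ring
          have h4k : (4:ℝ)^k ≤ 2^(2*k^2) := by
            have h44 : (4:ℝ)^k = 2^(2*k) := by
              rw [show (4:ℝ) = 2^2 by norm_num, ← pow_mul]
            rw [h44]
            apply pow_le_pow_right₀ (by norm_num : (1:ℝ) ≤ 2)
            have hkk : k ≤ k^2 := Nat.le_self_pow (by norm_num) k
            exact Nat.mul_le_mul_left 2 hkk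
          have hη2 : (2:ℝ)^(2*k^2) * η < ρ := by
            have h0 := (lt_div_iff₀ (show (0:ℝ) < 2^(2*k^2) by positivity)).mp hη1
            linarith only [h0]
          have hembed_size : (4:ℝ)^k * (η * A.card) ≤ X₁.card := by
            have e1 : (4:ℝ)^k * (η * A.card) ≤ 2^(2*k^2) * (η*A.card) :=
              mul_le_mul_of_nonneg_right h4k (by positivity)
            have e2 : (2:ℝ)^(2*k^2) * (η*A.card) ≤ ρ * A.card := by
              have e2' := mul_le_mul_of_nonneg_right hη2.le hApos.le
              calc (2:ℝ)^(2*k^2) * (η*A.card) = (2^(2*k^2) * η) * A.card := by ring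
              _ ≤ ρ * A.card := e2'
            have e3 : ρ * (A.card:ℝ) ≤ (γ/2)^(i+1) * A.card :=
              mul_le_mul_of_nonneg_right hρi hApos.le
            linarith only [e1, e2, e3, hX₁card]
          obtain ⟨S, hSX₁, hScard, hSmono⟩ := embed_red_clique χ hsym A η hAreg hAdens hη0
            (by linarith) hηA k X₁ (hX₁sub.trans (hX'Ai.trans hAiA)) hembed_size
          have hdegP : ∀ u ∈ S, ((((B \ Bi) ∪ Y').filter fun b => χ u b = true).card : ℝ)
              ≤ 2*lam*(((B \ Bi) ∪ Y').card:ℝ) := by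
            intro u hu
            have huX₁ : u ∈ X₁ := hSX₁ hu
            have h2 := hX₁mem u huX₁
            have h1 := hdeginv u (hX'Ai (hX₁sub huX₁))
            rw [Finset.filter_union,
              Finset.card_union_of_disjoint (Finset.disjoint_filter_filter hdisj),
              Finset.card_union_of_disjoint hdisj]
            push_cast
            linarith only [h1, h2]
          have hcompl : ((B \ Bi) ∪ Y').filter (fun b => ¬ ∀ u ∈ S, χ b u = false)
              ⊆ S.biUnion fun u => ((B \ Bi) ∪ Y').filter fun b => χ u b = true := by
            intro b hb
            rw [Finset.mem_filter] at hb
            obtain ⟨hbP, hbad⟩ := hb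
            push_neg at hbad
            obtain ⟨u, huS, hbu⟩ := hbad
            refine Finset.mem_biUnion.mpr ⟨u, huS, Finset.mem_filter.mpr ⟨hbP, ?_⟩⟩
            rw [hsym]
            simpa using hbu
          have hcard1 : ((((B \ Bi) ∪ Y').filter (fun b => ¬ ∀ u ∈ S, χ b u = false)).card : ℝ)
              ≤ 2*(k:ℝ)*lam * (((B \ Bi) ∪ Y').card:ℝ) := by
            calc ((((B \ Bi) ∪ Y').filter (fun b => ¬ ∀ u ∈ S, χ b u = false)).card : ℝ)
                ≤ ((S.biUnion fun u => ((B \ Bi) ∪ Y').filter fun b => χ u b = true).card : ℝ) := by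
                  exact_mod_cast Finset.card_le_card hcompl
            _ ≤ ∑ u ∈ S, ((((B \ Bi) ∪ Y').filter fun b => χ u b = true).card : ℝ) := by
                  exact_mod_cast Finset.card_biUnion_le
            _ ≤ ∑ u ∈ S, 2*lam*(((B \ Bi) ∪ Y').card:ℝ) := Finset.sum_le_sum hdegP
            _ = (S.card : ℝ) * (2*lam*(((B \ Bi) ∪ Y').card:ℝ)) := by
                  rw [Finset.sum_const, nsmul_eq_mul]
            _ = 2*(k:ℝ)*lam*(((B \ Bi) ∪ Y').card:ℝ) := by rw [hScard]; ring
          have hsplitP : ((((B \ Bi) ∪ Y').filter (fun b => ∀ u ∈ S, χ b u = false)).card : ℝ)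
              + ((((B \ Bi) ∪ Y').filter (fun b => ¬ ∀ u ∈ S, χ b u = false)).card : ℝ)
              = (((B \ Bi) ∪ Y').card:ℝ) := by
            exact_mod_cast Finset.card_filter_add_card_filter_not _
          refine Or.inl (Or.inl ⟨S, hSX₁.trans (hX₁sub.trans (hX'Ai.trans hAiA)), hScard, hSmono, ?_⟩)
          have hsubset : ↑(((B \ Bi) ∪ Y').filter (fun b => ∀ u ∈ S, χ b u = false))
              ⊆ {v : Fin N | v ∈ B ∧ ∀ u ∈ S, χ v u = false} := by
            intro b hb
            rw [Finset.mem_coe, Finset.mem_filter] at hb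
            exact ⟨hPB hb.1, hb.2⟩
          have hT2 : ((((B \ Bi) ∪ Y').filter (fun b => ∀ u ∈ S, χ b u = false)).card : ℝ)
              ≤ (({v : Fin N | v ∈ B ∧ ∀ u ∈ S, χ v u = false}.ncard) : ℝ) := by
            have h0 := Set.ncard_le_ncard hsubset (Set.toFinite _)
            rw [Set.ncard_coe_finset] at h0
            exact_mod_cast h0
          have hβeq : β = β' * (1 - 2*(k:ℝ)*lam) := by
            rw [hβ']
            field_simp
          have hfin1 : (0:ℝ) ≤ (1 - 2*(k:ℝ)*lam) * ((((B \ Bi) ∪ Y').card:ℝ) - β' * B.card) :=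
            mul_nonneg h2kl.le (by linarith)
          rw [hβeq]
          linarith only [hfin1, hsplitP, hcard1, hT2]
        · -- recurse
          push_neg at hbig
          have hdisj : Disjoint (B \ Bi) Y' :=
            Finset.disjoint_left.mpr fun b hb hbY => (Finset.mem_sdiff.mp hb).2 (hY'Bi hbY)
          have hBdiff : B \ (Bi \ Y') = (B \ Bi) ∪ Y' := by
            ext b
            simp only [Finset.mem_sdiff, Finset.mem_union]
            constructor
            · rintro ⟨hbB, h⟩
              by_cases hbBi : b ∈ Bi
              · right
                by_contra hbY
                exact h ⟨hbBi, hbY⟩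
              · exact Or.inl ⟨hbB, hbBi⟩
            · rintro (⟨hbB, hbBi⟩ | hbY)
              · exact ⟨hbB, fun hc => hbBi hc.1⟩
              · exact ⟨hY'B hbY, fun hc => hc.2 hbY⟩
          have hcardU : (((B \ Bi) ∪ Y').card : ℝ) = ((B \ Bi).card : ℝ) + Y'.card := by
            rw [Finset.card_union_of_disjoint hdisj]
            push_cast
            ring
          refine Or.inr ⟨X₁, Bi \ Y', hX₁sub.trans (hX'Ai.trans hAiA),
            Finset.sdiff_subset.trans hBiB, hX₁card, ?_, ?_, ?_⟩
          · rw [hBdiff, hcardU]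
            linarith only [hbig]
          · have hYle := Finset.card_le_card hY'Bi
            rw [Finset.card_sdiff_of_subset hY'Bi, Nat.cast_sub hYle]
            have hps' : ((1:ℝ)-γ)^(i+1) * B.card
                = (1-γ)^i * B.card - γ*((1-γ)^i * B.card) := by rw [pow_succ]; ring
            have h2 : (1-γ) * (Bi.card:ℝ) ≤ (1-γ) * ((1-γ)^i * B.card) :=
              mul_le_mul_of_nonneg_left hBup (by linarith only [hγ1])
            linarith only [hps', h2, hc2]
          · intro v hv
            have h1 := hdeginv v (hX'Ai (hX₁sub hv))
            have h2 := hX₁mem v hv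
            rw [hBdiff, Finset.filter_union,
              Finset.card_union_of_disjoint (Finset.disjoint_filter_filter hdisj),
              Finset.card_union_of_disjoint hdisj]
            push_cast
            linarith only [h1, h2]

  obtain ⟨i₀, hi₀⟩ := exists_pow_lt_of_lt_one h1β'0 (show (1:ℝ) - γ < 1 by linarith)
  rcases key i₀ with hgoal | ⟨Ai, Bi, _, hBiB, _, hBd, hBup, _⟩
  · exact hgoal
  · exfalso
    have hBisum := hBsplit Bi hBiB
    have h1 := mul_lt_mul_of_pos_right hi₀ hBpos
    have h2 : (1-β') * B.card = B.card - β' * B.card := by ring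
    linarith
end

section
/- Fix 0 < λ < 1, an integer r ≥ 1, and 0 < γ < λ^r. Suppose G is a bipartite graph with parts A and B such that the pair (A,B) is lower-(λ,γ)-regular. Suppose H = (B, F) is an r-uniform hypergraph with vertex set B and edge set F. Define an extension to be a pair (a, f) ∈ A × F such that a is adjacent in G to every vertex of f. Then the number of extensions is at least λ^r·|A|·(|F| − (rγ/λ^{r−1})·|B|^r). -/
open Finset

attribute [local instance] Classical.propDecidable

/-- Number of pairs in `X × Y` that are edges of `G`. -/
noncomputable def edgeCnt {V : Type*} (G : SimpleGraph V) (X Y : Finset V) : ℕ :=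
  {p : V × V | p.1 ∈ X ∧ p.2 ∈ Y ∧ G.Adj p.1 p.2}.ncard

/-- Edge density between the vertex sets `X` and `Y`. -/
noncomputable def gDens {V : Type*} (G : SimpleGraph V) (X Y : Finset V) : ℝ :=
  (edgeCnt G X Y : ℝ) / ((X.card : ℝ) * (Y.card : ℝ))

/-- The pair `(X, Y)` is lower-`(lam, γ)`-regular in `G`. -/
def GLowerReg {V : Type*} (G : SimpleGraph V) (lam γ : ℝ) (X Y : Finset V) : Prop :=
  ∀ X' ⊆ X, ∀ Y' ⊆ Y, γ * (X.card : ℝ) ≤ (X'.card : ℝ) → γ * (Y.card : ℝ) ≤ (Y'.card : ℝ) →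
    lam ≤ gDens G X' Y'

lemma filterProdCard {α β : Type*} (X : Finset α) (Y : Finset β) (P : α → β → Prop)
    [∀ a b, Decidable (P a b)] :
    ((X ×ˢ Y).filter fun p => P p.1 p.2).card = ∑ y ∈ Y, (X.filter fun a => P a y).card := by
  simp only [Finset.card_filter]
  rw [Finset.sum_product]
  exact Finset.sum_comm

/-- Common neighborhood in `A` of the set `S`. -/
noncomputable def Nbh {V : Type} [DecidableEq V] (G : SimpleGraph V) (A S : Finset V) :
    Finset V :=
  A.filter (fun a => ∀ v ∈ S, G.Adj a v)

lemma Nbh_subset {V : Type} [DecidableEq V] (G : SimpleGraph V) (A S : Finset V) :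
    Nbh G A S ⊆ A := Finset.filter_subset _ _

lemma Nbh_insert {V : Type} [DecidableEq V] (G : SimpleGraph V) (A S : Finset V) (v : V) :
    Nbh G A (insert v S) = (Nbh G A S).filter (fun a => G.Adj a v) := by
  simp only [Nbh, Finset.filter_filter]
  ext a
  simp only [Finset.mem_filter, Finset.forall_mem_insert]
  tauto

lemma edgeCnt_eq {V : Type} [DecidableEq V] (G : SimpleGraph V) (X Y : Finset V) :
    edgeCnt G X Y = ∑ y ∈ Y, (X.filter fun a => G.Adj a y).card := by
  have h : {p : V × V | p.1 ∈ X ∧ p.2 ∈ Y ∧ G.Adj p.1 p.2}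
      = ↑((X ×ˢ Y).filter fun p => G.Adj p.1 p.2) := by
    ext ⟨a, b⟩
    simp [Finset.mem_filter, Finset.mem_product, and_assoc]
  rw [edgeCnt, h, Set.ncard_coe_finset]
  exact filterProdCard X Y (fun a y => G.Adj a y)

lemma bd_card_le {V : Type} [Fintype V] [DecidableEq V] (G : SimpleGraph V)
    (lam γ : ℝ) (hlam0 : 0 < lam) (hγ0 : 0 < γ)
    (A B : Finset V) (hreg : GLowerReg G lam γ A B) (S : Finset V)
    (hNS : γ * (A.card : ℝ) ≤ ((Nbh G A S).card : ℝ)) :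
    ((B.filter fun v =>
        ((Nbh G A (insert v S)).card : ℝ) < lam * ((Nbh G A S).card : ℝ)).card : ℝ)
      ≤ γ * B.card := by
  by_contra hcon
  push_neg at hcon
  set Bd := B.filter fun v =>
    ((Nbh G A (insert v S)).card : ℝ) < lam * ((Nbh G A S).card : ℝ) with hBddef
  have hBd : γ * (B.card : ℝ) ≤ (Bd.card : ℝ) := le_of_lt hcon
  have hd := hreg (Nbh G A S) (Nbh_subset G A S) Bd (Finset.filter_subset _ _) hNS hBd
  rw [gDens] at hd
  rcases Nat.eq_zero_or_pos (Nbh G A S).card with h0 | h0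
  · rw [h0] at hd
    simp only [Nat.cast_zero, zero_mul, div_zero] at hd
    linarith
  have hBdne : Bd.Nonempty := by
    rw [← Finset.card_pos, ← Nat.cast_pos (α := ℝ)]
    have h0' : (0:ℝ) ≤ γ * B.card := by positivity
    linarith
  have he : (edgeCnt G (Nbh G A S) Bd : ℝ) < lam * ((Nbh G A S).card : ℝ) * Bd.card := by
    rw [edgeCnt_eq]
    push_cast
    have hsum : ∑ v ∈ Bd, (((Nbh G A S).filter fun a => G.Adj a v).card : ℝ)
        < ∑ _v ∈ Bd, lam * ((Nbh G A S).card : ℝ) := by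
      refine Finset.sum_lt_sum_of_nonempty hBdne fun v hv => ?_
      rw [← Nbh_insert]
      exact (Finset.mem_filter.1 hv).2
    rw [Finset.sum_const, nsmul_eq_mul] at hsum
    calc ∑ v ∈ Bd, (((Nbh G A S).filter fun a => G.Adj a v).card : ℝ)
        < (Bd.card : ℝ) * (lam * ((Nbh G A S).card : ℝ)) := hsum
      _ = lam * ((Nbh G A S).card : ℝ) * Bd.card := by ring
  have hn : (0:ℝ) < ((Nbh G A S).card : ℝ) := by exact_mod_cast h0
  have hm : (0:ℝ) < (Bd.card : ℝ) := by
    exact_mod_cast Finset.card_pos.2 hBdne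
  rw [le_div_iff₀ (by positivity)] at hd
  nlinarith

/-- Sets `S` of size `i` in `B` whose common neighborhood is too small. -/
noncomputable def badSet {V : Type} [DecidableEq V] (G : SimpleGraph V)
    (A B : Finset V) (lam : ℝ) (i : ℕ) : Finset (Finset V) :=
  (B.powersetCard i).filter (fun S => ((Nbh G A S).card : ℝ) < lam ^ i * A.card)

lemma badSet_card_le {V : Type} [Fintype V] [DecidableEq V] (G : SimpleGraph V)
    (lam γ : ℝ) (r : ℕ) (hlam0 : 0 < lam) (hlam1 : lam < 1)
    (hγ0 : 0 < γ) (hγ1 : γ < lam ^ r)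
    (A B : Finset V) (hreg : GLowerReg G lam γ A B) :
    ∀ i ≤ r, ((badSet G A B lam i).card : ℝ) ≤ i * γ * (B.card : ℝ) ^ i := by
  intro i
  induction i with
  | zero =>
    intro _
    have hempty : badSet G A B lam 0 = ∅ := by
      rw [Finset.eq_empty_iff_forall_notMem]
      intro S hS
      rw [badSet, Finset.mem_filter, Finset.powersetCard_zero, Finset.mem_singleton] at hS
      obtain ⟨rfl, h2⟩ := hS
      have : Nbh G A ∅ = A := by simp [Nbh]
      rw [this] at h2
      simp only [pow_zero, one_mul] at h2
      linarith
    simp [hempty]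
  | succ i ih =>
    intro hle
    have hir : i ≤ r := le_trans (Nat.le_succ i) hle
    have IH := ih hir
    set 𝒮 := badSet G A B lam (i+1) with h𝒮
    set goodSet := (B.powersetCard i).filter
      (fun S => lam ^ i * (A.card : ℝ) ≤ ((Nbh G A S).card : ℝ)) with hgood
    set Bd := fun S' : Finset V => B.filter fun v =>
      ((Nbh G A (insert v S')).card : ℝ) < lam * ((Nbh G A S').card : ℝ) with hBd
    set s := 𝒮.biUnion (fun S => S.image (fun v => (S, v))) with hs
    set T := ((badSet G A B lam i) ×ˢ B)
      ∪ (goodSet.biUnion fun S' => (Bd S').image fun v => (S', v)) with hT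
    have hcard𝒮 : ∀ S ∈ 𝒮, S ⊆ B ∧ S.card = i + 1 := by
      intro S hS
      rw [h𝒮, badSet, Finset.mem_filter, Finset.mem_powersetCard] at hS
      exact hS.1
    have h𝒮s : 𝒮.card ≤ s.card := by
      rw [hs, Finset.card_biUnion]
      · calc 𝒮.card = ∑ _S ∈ 𝒮, 1 := by simp
          _ ≤ ∑ S ∈ 𝒮, (S.image (fun v => (S, v))).card := by
            refine Finset.sum_le_sum fun S hS => ?_
            rw [Finset.card_image_of_injective _ (fun a b hab => congrArg Prod.snd hab)]
            have := (hcard𝒮 S hS).2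
            omega
      · intro S1 h1 S2 h2 hne
        refine Finset.disjoint_left.2 fun p hp1 hp2 => hne ?_
        rcases Finset.mem_image.1 hp1 with ⟨v, _, rfl⟩
        rcases Finset.mem_image.1 hp2 with ⟨w, _, hw⟩
        exact congrArg Prod.fst hw.symm
    have hsT : s.card ≤ T.card := by
      refine Finset.card_le_card_of_injOn (fun p => (p.1.erase p.2, p.2)) ?_ ?_
      · intro p hp
        rcases Finset.mem_biUnion.1 hp with ⟨S, hS𝒮, hpS⟩
        rcases Finset.mem_image.1 hpS with ⟨v, hvS, rfl⟩
        obtain ⟨hSB, hScard⟩ := hcard𝒮 S hS𝒮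
        have hSbad : ((Nbh G A S).card : ℝ) < lam ^ (i+1) * A.card := by
          have := Finset.mem_filter.1 hS𝒮
          exact this.2
        have heB : S.erase v ⊆ B := (Finset.erase_subset _ _).trans hSB
        have hecard : (S.erase v).card = i := by
          rw [Finset.card_erase_of_mem hvS, hScard]
          omega
        have hmem : S.erase v ∈ B.powersetCard i :=
          Finset.mem_powersetCard.2 ⟨heB, hecard⟩
        by_cases hgb : ((Nbh G A (S.erase v)).card : ℝ) < lam ^ i * A.card
        · exact Finset.mem_union_left _ (Finset.mem_product.2
            ⟨Finset.mem_filter.2 ⟨hmem, hgb⟩, hSB hvS⟩)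
        · push_neg at hgb
          refine Finset.mem_union_right _ (Finset.mem_biUnion.2
            ⟨S.erase v, Finset.mem_filter.2 ⟨hmem, hgb⟩,
              Finset.mem_image.2 ⟨v, ?_, rfl⟩⟩)
          rw [hBd]
          refine Finset.mem_filter.2 ⟨hSB hvS, ?_⟩
          rw [Finset.insert_erase hvS]
          calc ((Nbh G A S).card : ℝ) < lam ^ (i+1) * A.card := hSbad
            _ = lam * (lam ^ i * A.card) := by ring
            _ ≤ lam * ((Nbh G A (S.erase v)).card : ℝ) := by
                exact mul_le_mul_of_nonneg_left hgb hlam0.le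
      · intro p hp q hq heq
        rcases Finset.mem_biUnion.1 hp with ⟨S, hS𝒮, hpS⟩
        rcases Finset.mem_image.1 hpS with ⟨v, hvS, rfl⟩
        rcases Finset.mem_biUnion.1 hq with ⟨S2, hS2𝒮, hqS⟩
        rcases Finset.mem_image.1 hqS with ⟨w, hwS, rfl⟩
        simp only [Prod.mk.injEq] at heq ⊢
        obtain ⟨h1, h2⟩ := heq
        subst h2
        refine ⟨?_, rfl⟩
        rw [← Finset.insert_erase hvS, ← Finset.insert_erase hwS, h1]
    have hTcard : (T.card : ℝ) ≤ (badSet G A B lam i).card * B.card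
        + ∑ S' ∈ goodSet, ((Bd S').card : ℝ) := by
      calc (T.card : ℝ) ≤ ((badSet G A B lam i) ×ˢ B).card
            + ((goodSet.biUnion fun S' => (Bd S').image fun v => (S', v)).card : ℝ) := by
            exact_mod_cast Finset.card_union_le _ _
        _ ≤ (badSet G A B lam i).card * B.card + ∑ S' ∈ goodSet, ((Bd S').card : ℝ) := by
            rw [Finset.card_product]
            push_cast
            gcongr
            calc ((goodSet.biUnion fun S' => (Bd S').image fun v => (S', v)).card : ℝ)
                ≤ ((∑ S' ∈ goodSet, ((Bd S').image fun v => (S', v)).card : ℕ) : ℝ) := by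
                  exact_mod_cast Finset.card_biUnion_le
              _ ≤ ∑ S' ∈ goodSet, ((Bd S').card : ℝ) := by
                  push_cast
                  exact Finset.sum_le_sum fun S' _ => by
                    exact_mod_cast Finset.card_image_le
    have hBdle : ∀ S' ∈ goodSet, ((Bd S').card : ℝ) ≤ γ * B.card := by
      intro S' hS'
      have hgd := (Finset.mem_filter.1 hS').2
      have hγi : γ ≤ lam ^ i := le_trans hγ1.le (pow_le_pow_of_le_one hlam0.le hlam1.le hir)
      refine bd_card_le G lam γ hlam0 hγ0 A B hreg S' ?_
      calc γ * (A.card : ℝ) ≤ lam ^ i * A.card := by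
            exact mul_le_mul_of_nonneg_right hγi (Nat.cast_nonneg _)
        _ ≤ ((Nbh G A S').card : ℝ) := hgd
    have hgoodcard : ((goodSet.card : ℝ)) ≤ (B.card : ℝ) ^ i := by
      calc ((goodSet.card : ℝ)) ≤ ((B.powersetCard i).card : ℝ) := by
            exact_mod_cast Finset.card_le_card (Finset.filter_subset _ _)
        _ = ((B.card.choose i : ℕ) : ℝ) := by rw [Finset.card_powersetCard]
        _ ≤ ((B.card ^ i : ℕ) : ℝ) := by exact_mod_cast Nat.choose_le_pow _ _
        _ = (B.card : ℝ) ^ i := by push_cast; ring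
    have hsum : ∑ S' ∈ goodSet, ((Bd S').card : ℝ) ≤ (B.card : ℝ) ^ i * (γ * B.card) := by
      calc ∑ S' ∈ goodSet, ((Bd S').card : ℝ) ≤ ∑ _S' ∈ goodSet, γ * (B.card : ℝ) :=
            Finset.sum_le_sum hBdle
        _ = (goodSet.card : ℝ) * (γ * B.card) := by rw [Finset.sum_const, nsmul_eq_mul]
        _ ≤ (B.card : ℝ) ^ i * (γ * B.card) := by
            have : (0:ℝ) ≤ γ * B.card := by positivity
            exact mul_le_mul_of_nonneg_right hgoodcard this
    have hmain : (𝒮.card : ℝ) ≤ (T.card : ℝ) := by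
      exact_mod_cast le_trans h𝒮s hsT
    have hBpos : (0:ℝ) ≤ (B.card : ℝ) := Nat.cast_nonneg _
    calc (𝒮.card : ℝ) ≤ (badSet G A B lam i).card * B.card
          + ∑ S' ∈ goodSet, ((Bd S').card : ℝ) := le_trans hmain hTcard
      _ ≤ (i * γ * (B.card : ℝ) ^ i) * B.card + (B.card : ℝ) ^ i * (γ * B.card) := by
          gcongr
      _ = (i + 1 : ℕ) * γ * (B.card : ℝ) ^ (i + 1) := by push_cast; ring

/-- If the pair `(A, B)` of parts of a bipartite graph is lower-`(λ, γ)`-regular and `F`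
is an `r`-uniform hypergraph on `B`, then the number of pairs `(a, f) ∈ A × F` with `a`
adjacent to every vertex of `f` is at least `λ^r |A| (|F| − (rγ/λ^(r−1)) |B|^r)`. -/
theorem lower_regular_extension_count {V : Type} [Fintype V] [DecidableEq V]
    (G : SimpleGraph V) (lam γ : ℝ) (r : ℕ) (hr : 1 ≤ r)
    (hlam0 : 0 < lam) (hlam1 : lam < 1)
    (hγ0 : 0 < γ) (hγ1 : γ < lam ^ r)
    (A B : Finset V) (hAB : Disjoint A B)
    (hreg : GLowerReg G lam γ A B)
    (F : Finset (Finset V)) (hF : ∀ f ∈ F, f ⊆ B ∧ f.card = r) :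
    lam ^ r * (A.card : ℝ) * ((F.card : ℝ) - r * γ / lam ^ (r - 1) * (B.card : ℝ) ^ r) ≤
      ({p : V × Finset V | p.1 ∈ A ∧ p.2 ∈ F ∧ ∀ v ∈ p.2, G.Adj p.1 v}.ncard : ℝ) := by
  have hsetE : {p : V × Finset V | p.1 ∈ A ∧ p.2 ∈ F ∧ ∀ v ∈ p.2, G.Adj p.1 v}
      = ↑((A ×ˢ F).filter fun p => ∀ v ∈ p.2, G.Adj p.1 v) := by
    ext ⟨a, f⟩
    simp [Finset.mem_filter, Finset.mem_product, and_assoc]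
  rw [hsetE, Set.ncard_coe_finset,
    filterProdCard A F (fun a f => ∀ v ∈ f, G.Adj a v)]
  have hsum_eq : ∑ f ∈ F, (A.filter fun a => ∀ v ∈ f, G.Adj a v).card
      = ∑ f ∈ F, (Nbh G A f).card := by
    refine Finset.sum_congr rfl fun f _ => ?_
    unfold Nbh
    congr
  rw [hsum_eq]
  set P : Finset V → Prop := fun f => lam ^ r * (A.card : ℝ) ≤ ((Nbh G A f).card : ℝ) with hP
  set goodF := F.filter P with hgoodF
  set badF := F.filter (fun f => ¬ P f) with hbadF
  have hpart : goodF.card + badF.card = F.card :=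
    Finset.card_filter_add_card_filter_not _
  have hbadsub : badF ⊆ badSet G A B lam r := by
    intro f hf
    rw [hbadF, Finset.mem_filter] at hf
    obtain ⟨hfF, hfbad⟩ := hf
    simp only [hP, not_le] at hfbad
    exact Finset.mem_filter.2 ⟨Finset.mem_powersetCard.2 ⟨(hF f hfF).1, (hF f hfF).2⟩, hfbad⟩
  have hbadcard : ((badF.card : ℝ)) ≤ r * γ * (B.card : ℝ) ^ r :=
    le_trans (by exact_mod_cast Finset.card_le_card hbadsub)
      (badSet_card_le G lam γ r hlam0 hlam1 hγ0 hγ1 A B hreg r le_rfl)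
  have hsumge : (goodF.card : ℝ) * (lam ^ r * (A.card : ℝ))
      ≤ ((∑ f ∈ F, (Nbh G A f).card : ℕ) : ℝ) := by
    push_cast
    calc (goodF.card : ℝ) * (lam ^ r * (A.card : ℝ))
        = ∑ _f ∈ goodF, lam ^ r * (A.card : ℝ) := by
          rw [Finset.sum_const, nsmul_eq_mul]
      _ ≤ ∑ f ∈ goodF, ((Nbh G A f).card : ℝ) :=
          Finset.sum_le_sum fun f hf => (Finset.mem_filter.1 hf).2
      _ ≤ ∑ f ∈ F, ((Nbh G A f).card : ℝ) :=
          Finset.sum_le_sum_of_subset_of_nonneg (Finset.filter_subset _ _)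
            (fun f _ _ => Nat.cast_nonneg _)
  have hl1 : lam ^ (r - 1) ≤ 1 := pow_le_one₀ hlam0.le hlam1.le
  have hl2 : (0:ℝ) < lam ^ (r - 1) := pow_pos hlam0 _
  have hdiv : (r : ℝ) * γ ≤ r * γ / lam ^ (r - 1) := by
    rw [le_div_iff₀ hl2]
    have : (0:ℝ) ≤ (r:ℝ) * γ := by positivity
    nlinarith
  have hgoodF : (F.card : ℝ) - r * γ / lam ^ (r - 1) * (B.card : ℝ) ^ r ≤ (goodF.card : ℝ) := by
    have hpart' : (goodF.card : ℝ) + (badF.card : ℝ) = (F.card : ℝ) := by exact_mod_cast hpart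
    have hBr : (0:ℝ) ≤ (B.card : ℝ) ^ r := by positivity
    nlinarith
  calc lam ^ r * (A.card : ℝ) * ((F.card : ℝ) - r * γ / lam ^ (r - 1) * (B.card : ℝ) ^ r)
      ≤ lam ^ r * (A.card : ℝ) * (goodF.card : ℝ) := by
        have : (0:ℝ) ≤ lam ^ r * (A.card : ℝ) := by positivity
        exact mul_le_mul_of_nonneg_left hgoodF this
    _ = (goodF.card : ℝ) * (lam ^ r * (A.card : ℝ)) := by ring
    _ ≤ _ := hsumge
end

section
/- Let k ≥ 3 be an integer. Then for every ε₀ > 0 there exists δ₀ > 0 such that for any x₁, ..., x_k ∈ [0,1] with |x_j − 1/2| ≥ ε₀ for some index j, one has ∏_{i=1}^k x_i + (1/k)·∑_{i=1}^k (1 − x_i)^k ≥ 2^{1−k} + δ₀. -/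
open Real Finset

private lemma claimP : ∀ (k : ℕ), 1 ≤ k → ∀ u : ℝ, 0 ≤ u → u ≤ 1 →
    1 - (k:ℝ)*u + ((k:ℝ)-1)*u^2 ≤ (1-u)^k := by
  intro k
  induction k with
  | zero => intro h; exact absurd h (by norm_num)
  | succ n ih =>
    intro _ u hu hu1
    rcases Nat.eq_zero_or_pos n with hn | hn
    · subst hn; push_cast; nlinarith
    · have hn1 : (1:ℝ) ≤ (n:ℝ) := by exact_mod_cast hn
      have h := ih hn u hu hu1
      have h1 : (1-u)^(n+1) = (1-u) * (1-u)^n := by ring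
      have key : (0:ℝ) ≤ ((n:ℝ)-1) * u^2 * (1-u) :=
        mul_nonneg (mul_nonneg (by linarith) (sq_nonneg u)) (by linarith)
      rcases le_or_gt 0 (1 - (n:ℝ)*u + ((n:ℝ)-1)*u^2) with hg | hg
      · have h2 : (1-u) * (1 - (n:ℝ)*u + ((n:ℝ)-1)*u^2) ≤ (1-u) * (1-u)^n :=
          mul_le_mul_of_nonneg_left h (by linarith)
        rw [h1]; push_cast; nlinarith
      · have hp : (0:ℝ) ≤ (1-u)^(n+1) := pow_nonneg (by linarith) _
        push_cast
        nlinarith [mul_nonneg hu (sub_nonneg.2 hu1)]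

private lemma claimQ : ∀ (k : ℕ), ∀ v : ℝ, 0 ≤ v →
    1 + (k:ℝ)*v + ((k:ℝ)*((k:ℝ)-1)/2)*v^2 ≤ (1+v)^k := by
  intro k
  induction k with
  | zero => intro v hv; norm_num
  | succ n ih =>
    intro v hv
    have h := ih v hv
    have h1 : (1+v)^(n+1) = (1+v) * (1+v)^n := by ring
    have h2 : (1+v) * (1 + (n:ℝ)*v + ((n:ℝ)*((n:ℝ)-1)/2)*v^2) ≤ (1+v) * (1+v)^n :=
      mul_le_mul_of_nonneg_left h (by positivity)
    have key : (0:ℝ) ≤ ((n:ℝ)*((n:ℝ)-1)/2) * (v^2*v) := by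
      rcases Nat.eq_zero_or_pos n with hn | hn
      · subst hn; norm_num
      · have h3 : (1:ℝ) ≤ (n:ℝ) := by exact_mod_cast hn
        have h4 : (0:ℝ) ≤ v^2*v := mul_nonneg (sq_nonneg v) hv
        have h5 : (0:ℝ) ≤ (n:ℝ)*((n:ℝ)-1)/2 := by nlinarith
        exact mul_nonneg h5 h4
    rw [h1]; push_cast; nlinarith

private lemma expPos {u : ℝ} (h0 : 0 ≤ u) (h1 : u ≤ 1) : exp (u - (3/5)*u^2) ≤ 1 + u := by
  have hb := Real.exp_bound' h0 h1 (n := 3) (by norm_num)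
  have hsum : (∑ m ∈ Finset.range 3, u ^ m / m.factorial) = 1 + u + u^2/2 := by
    norm_num [Finset.sum_range_succ, Nat.factorial]
  rw [hsum] at hb
  norm_num [Nat.factorial] at hb
  have h2 : (1:ℝ) + (3/5)*u^2 ≤ exp ((3/5)*u^2) := by
    have := Real.add_one_le_exp ((3/5)*u^2); linarith
  have h3 : exp u ≤ (1+u) * (1 + (3/5)*u^2) := by
    nlinarith [pow_nonneg h0 3, mul_nonneg (mul_nonneg h0 h0) (sub_nonneg.2 h1)]
  have h4 : exp u ≤ (1+u) * exp ((3/5)*u^2) := by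
    have hp : (0:ℝ) ≤ 1 + u := by linarith
    calc exp u ≤ (1+u) * (1 + (3/5)*u^2) := h3
    _ ≤ (1+u) * exp ((3/5)*u^2) := mul_le_mul_of_nonneg_left h2 hp
  rw [Real.exp_sub, div_le_iff₀ (Real.exp_pos _)]
  linarith

private lemma expNeg4 {v : ℝ} (h0 : 0 ≤ v) (h1 : v ≤ 7/10) : exp (-(v + (7/5)*v^2)) ≤ 1 - v := by
  set x := v + (7/5)*v^2 with hx
  have hx0 : 0 ≤ x := by positivity
  have hs := Real.sum_le_exp_of_nonneg hx0 5
  have hsum : (∑ i ∈ Finset.range 5, x ^ i / i.factorial) = 1 + x + x^2/2 + x^3/6 + x^4/24 := by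
    norm_num [Finset.sum_range_succ, Nat.factorial]
  rw [hsum] at hs
  have key : 1 ≤ (1-v) * (1 + x + x^2/2 + x^3/6 + x^4/24) := by
    rw [hx]
    nlinarith [sq_nonneg v, mul_nonneg h0 h0, pow_nonneg h0 3, pow_nonneg h0 4,
      pow_nonneg h0 5, mul_nonneg (mul_nonneg h0 h0) (sub_nonneg.2 h1),
      sq_nonneg (v*(7/10 - v))]
  have h5 : 1 ≤ (1-v) * exp x := by
    calc (1:ℝ) ≤ (1-v) * (1 + x + x^2/2 + x^3/6 + x^4/24) := key
    _ ≤ (1-v) * exp x := mul_le_mul_of_nonneg_left hs (by linarith)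
  rw [Real.exp_neg, inv_le_iff_one_le_mul₀ (Real.exp_pos _)]
  linarith [mul_comm (1-v) (exp x)]

private lemma expNeg3 {v : ℝ} (h0 : 0 ≤ v) (h1 : v ≤ 13/20) : exp (-(v + v^2)) ≤ 1 - v := by
  set x := v + v^2 with hx
  have hx0 : 0 ≤ x := by positivity
  have hs := Real.sum_le_exp_of_nonneg hx0 5
  have hsum : (∑ i ∈ Finset.range 5, x ^ i / i.factorial) = 1 + x + x^2/2 + x^3/6 + x^4/24 := by
    norm_num [Finset.sum_range_succ, Nat.factorial]
  rw [hsum] at hs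
  have key : 1 ≤ (1-v) * (1 + x + x^2/2 + x^3/6 + x^4/24) := by
    rw [hx]
    nlinarith [sq_nonneg v, mul_nonneg h0 h0, pow_nonneg h0 3, pow_nonneg h0 4,
      pow_nonneg h0 5, mul_nonneg (mul_nonneg h0 h0) (sub_nonneg.2 h1),
      sq_nonneg (v*(13/20 - v))]
  have h5 : 1 ≤ (1-v) * exp x := by
    calc (1:ℝ) ≤ (1-v) * (1 + x + x^2/2 + x^3/6 + x^4/24) := key
    _ ≤ (1-v) * exp x := mul_le_mul_of_nonneg_left hs (by linarith)
  rw [Real.exp_neg, inv_le_iff_one_le_mul₀ (Real.exp_pos _)]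
  linarith [mul_comm (1-v) (exp x)]

private lemma seventeen : ∀ k : ℕ, 4 ≤ k → (41/20 : ℝ) * k ≤ (17/10)^k := by
  intro k
  induction k with
  | zero => intro h; omega
  | succ n ih =>
    intro h
    rcases Nat.lt_or_ge n 4 with hn | hn
    · interval_cases n
      · omega
      · omega
      · omega
      · norm_num
    · have h1 := ih (by omega)
      have h2 : ((17:ℝ)/10)^(n+1) = (17/10) * (17/10)^n := by ring
      have hn' : (4:ℝ) ≤ (n:ℝ) := by exact_mod_cast hn
      rw [h2]; push_cast
      nlinarith

private lemma X3main (a b c : ℝ) (ha : -1 ≤ a) (ha1 : a ≤ 1) (hb : -1 ≤ b) (hb1 : b ≤ 1)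
    (hc : -1 ≤ c) (hc1 : c ≤ 1)
    (hext : a ≤ -(13/20) ∨ b ≤ -(13/20) ∨ c ≤ -(13/20)) :
    123/20 ≤ (1-a)^3 + (1-b)^3 + (1-c)^3 + 3*((1+a)*(1+b)*(1+c)) := by
  have pa : (0:ℝ) ≤ 1 + a := by linarith
  have pb : (0:ℝ) ≤ 1 + b := by linarith
  have pc : (0:ℝ) ≤ 1 + c := by linarith
  have qa : (0:ℝ) ≤ 1 - a := by linarith
  have qb : (0:ℝ) ≤ 1 - b := by linarith
  have qc : (0:ℝ) ≤ 1 - c := by linarith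
  rcases hext with h | h | h
  · nlinarith [mul_nonneg (mul_nonneg pa pb) pc, sq_nonneg (b-c), sq_nonneg (b+c),
      mul_nonneg qb qc, sq_nonneg (b - 1/3), sq_nonneg (c-1/3), sq_nonneg (a+13/20),
      mul_nonneg (mul_nonneg qb qb) qc, mul_nonneg (mul_nonneg qc qc) qb]
  · nlinarith [mul_nonneg (mul_nonneg pa pb) pc, sq_nonneg (a-c), sq_nonneg (a+c),
      mul_nonneg qa qc, sq_nonneg (a - 1/3), sq_nonneg (c-1/3), sq_nonneg (b+13/20),
      mul_nonneg (mul_nonneg qa qa) qc, mul_nonneg (mul_nonneg qc qc) qa]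
  · nlinarith [mul_nonneg (mul_nonneg pa pb) pc, sq_nonneg (a-b), sq_nonneg (a+b),
      mul_nonneg qa qb, sq_nonneg (a - 1/3), sq_nonneg (b-1/3), sq_nonneg (c+13/20),
      mul_nonneg (mul_nonneg qa qa) qb, mul_nonneg (mul_nonneg qb qb) qa]

private lemma core (k : ℕ) (hk : 0 < k) (u ψ m : Fin k → ℝ)
    (H1 : ∀ i, exp (u i - ψ i) ≤ 1 + u i)
    (H2 : ∀ i, 1/(k:ℝ) - u i + ψ i + m i ≤ (1/(k:ℝ)) * (1 - u i)^k)
    (H3 : ∀ i, 0 ≤ m i) (j : Fin k) :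
    2 + m j ≤ ∏ i, (1 + u i) + (1/(k:ℝ)) * ∑ i, (1 - u i)^k := by
  have hprod : exp (∑ i, (u i - ψ i)) ≤ ∏ i, (1 + u i) := by
    rw [Real.exp_sum]
    exact Finset.prod_le_prod (fun i _ => (Real.exp_pos _).le) (fun i _ => H1 i)
  have hlin : 1 + ∑ i, (u i - ψ i) ≤ exp (∑ i, (u i - ψ i)) := by
    linarith [Real.add_one_le_exp (∑ i, (u i - ψ i))]
  have hsum : ∑ i, (1/(k:ℝ) - u i + ψ i + m i) ≤ (1/(k:ℝ)) * ∑ i, (1 - u i)^k := by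
    rw [Finset.mul_sum]
    exact Finset.sum_le_sum (fun i _ => H2 i)
  have hone : ∑ _i : Fin k, (1/(k:ℝ)) = 1 := by
    rw [Finset.sum_const, Finset.card_univ, Fintype.card_fin, nsmul_eq_mul]
    have : (k:ℝ) ≠ 0 := by positivity
    field_simp
  have hmj : m j ≤ ∑ i, m i :=
    Finset.single_le_sum (fun i _ => H3 i) (Finset.mem_univ j)
  have e1 : ∑ i, (u i - ψ i) = ∑ i, u i - ∑ i, ψ i := by
    rw [Finset.sum_sub_distrib]
  have e2 : ∑ i, (1/(k:ℝ) - u i + ψ i + m i)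
      = 1 - ∑ i, u i + ∑ i, ψ i + ∑ i, m i := by
    rw [Finset.sum_add_distrib, Finset.sum_add_distrib, Finset.sum_sub_distrib, hone]
  linarith [hprod, hlin, hsum]

set_option maxHeartbeats 2000000 in
/-- Stability version of the book inequality: for `k ≥ 3`, if some `x_j` is at distance
at least `ε₀` from `1/2`, then `∏ xᵢ + (1/k) ∑ (1 − xᵢ)^k` exceeds `2^(1−k)` by some
`δ₀ > 0` depending only on `k` and `ε₀`. -/
theorem stable_xi_inequality (k : ℕ) (hk : 3 ≤ k) (ε₀ : ℝ) (hε₀ : 0 < ε₀) :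
    ∃ δ₀ : ℝ, 0 < δ₀ ∧
      ∀ x : Fin k → ℝ, (∀ i, x i ∈ Set.Icc (0 : ℝ) 1) →
        (∃ j, ε₀ ≤ |x j - 1 / 2|) →
        (2 : ℝ) ^ (1 - (k : ℤ)) + δ₀ ≤ ∏ i, x i + (1 / (k : ℝ)) * ∑ i, (1 - x i) ^ k := by
  have hk0 : 0 < k := by omega
  have hkR : (0:ℝ) < (k:ℝ) := by exact_mod_cast hk0
  have h2k : (0:ℝ) < 2^k := by positivity
  obtain ⟨M, hM⟩ : ∃ M : ℝ, M = min (1/20) (min ((2*ε₀)^2/15) ((2*ε₀)^3/3)) := ⟨_, rfl⟩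
  have hMpos : 0 < M := by
    rw [hM]; apply lt_min (by norm_num); exact lt_min (by positivity) (by positivity)
  have hM20 : M ≤ 1/20 := hM ▸ min_le_left _ _
  have hM2 : M ≤ (2*ε₀)^2/15 := hM ▸ le_trans (min_le_right _ _) (min_le_left _ _)
  have hM3 : M ≤ (2*ε₀)^3/3 := hM ▸ le_trans (min_le_right _ _) (min_le_right _ _)
  refine ⟨M / 2^k, by positivity, ?_⟩
  intro x hx hwit
  obtain ⟨j, hj⟩ := hwit
  obtain ⟨u, hu⟩ : ∃ u : Fin k → ℝ, u = fun i => 2 * x i - 1 := ⟨_, rfl⟩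
  have huv : ∀ i, u i = 2 * x i - 1 := fun i => by rw [hu]
  have hub : ∀ i, -1 ≤ u i ∧ u i ≤ 1 := by
    intro i
    obtain ⟨h1, h2⟩ := hx i
    rw [huv i]; constructor <;> linarith
  have hujabs : 2*ε₀ ≤ |u j| := by
    have h1 : u j = 2 * (x j - 1/2) := by rw [huv j]; ring
    rw [h1, abs_mul]
    have h2 : |(2:ℝ)| = 2 := by norm_num
    rw [h2]
    linarith
  -- main claim in u coordinates
  have key : 2 + M ≤ ∏ i, (1 + u i) + (1/(k:ℝ)) * ∑ i, (1 - u i)^k := by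
    rcases eq_or_lt_of_le hk with hk3 | hk4
    · -- k = 3
      subst hk3
      by_cases hex : ∃ i, u i < -(13/20)
      · obtain ⟨i, hi⟩ := hex
        have hd : u 0 ≤ -(13/20) ∨ u 1 ≤ -(13/20) ∨ u 2 ≤ -(13/20) := by
          fin_cases i
          · exact Or.inl hi.le
          · exact Or.inr (Or.inl hi.le)
          · exact Or.inr (Or.inr hi.le)
        have h30 := hub 0; have h31 := hub 1; have h32 := hub 2
        have hX := X3main (u 0) (u 1) (u 2) h30.1 h30.2 h31.1 h31.2 h32.1 h32.2 hd
        rw [Fin.prod_univ_three, Fin.sum_univ_three]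
        have hc3 : ((3:ℕ):ℝ) = 3 := by norm_num
        rw [hc3]
        linarith
      · push_neg at hex
        obtain ⟨ψ, hψ⟩ : ∃ ψ : Fin 3 → ℝ,
            ψ = fun i => if 0 ≤ u i then (3/5)*(u i)^2 else (u i)^2 := ⟨_, rfl⟩
        obtain ⟨m, hm⟩ : ∃ m : Fin 3 → ℝ,
            m = fun i => if 0 ≤ u i then (1/15)*(u i)^2 else -((u i)^3)/3 := ⟨_, rfl⟩
        have H1 : ∀ i, exp (u i - ψ i) ≤ 1 + u i := by
          intro i
          by_cases h : 0 ≤ u i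
          · rw [hψ]; simp only [if_pos h]
            exact expPos h (hub i).2
          · rw [hψ]; simp only [if_neg h]
            push_neg at h
            have hv0 : 0 ≤ -u i := by linarith
            have hv1 : -u i ≤ 13/20 := by have := hex i; linarith
            have hE := expNeg3 hv0 hv1
            have e1 : -(-u i + (-u i)^2) = u i - (u i)^2 := by ring
            have e2 : 1 - (-u i) = 1 + u i := by ring
            rw [e1, e2] at hE
            exact hE
        have H2 : ∀ i, 1/((3:ℕ):ℝ) - u i + ψ i + m i ≤ (1/((3:ℕ):ℝ)) * (1 - u i)^(3:ℕ) := by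
          intro i
          have hc3 : ((3:ℕ):ℝ) = 3 := by norm_num
          rw [hc3]
          by_cases h : 0 ≤ u i
          · rw [hψ, hm]; simp only [if_pos h]
            have hP := claimP 3 (by norm_num) (u i) h (hub i).2
            have hc3' : ((3:ℕ):ℝ) = 3 := by norm_num
            rw [hc3'] at hP
            nlinarith [hP]
          · rw [hψ, hm]; simp only [if_neg h]
            have e : (1/(3:ℝ)) * (1 - u i)^(3:ℕ)
                = 1/3 - u i + (u i)^2 + (-((u i)^3)/3) := by ring
            rw [e]
        have H3 : ∀ i, 0 ≤ m i := by
          intro i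
          by_cases h : 0 ≤ u i
          · rw [hm]; simp only [if_pos h]; positivity
          · rw [hm]; simp only [if_neg h]
            push_neg at h
            have h1 : (0:ℝ) ≤ (-u i)^3 := pow_nonneg (by linarith) 3
            have h2 : (-u i)^3 = -((u i)^3) := by ring
            rw [h2] at h1
            linarith
        have hcore := core 3 (by norm_num) u ψ m H1 H2 H3 j
        have hmj : M ≤ m j := by
          by_cases h : 0 ≤ u j
          · rw [hm]; simp only [if_pos h]
            have habs : |u j| = u j := abs_of_nonneg h
            rw [habs] at hujabs
            have h2 : (2*ε₀)^2 ≤ (u j)^2 := by nlinarith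
            linarith
          · rw [hm]; simp only [if_neg h]
            push_neg at h
            have habs : |u j| = -u j := abs_of_neg h
            rw [habs] at hujabs
            have h2 : (2*ε₀)^3 ≤ (-u j)^3 := by
              apply pow_le_pow_left₀ (by positivity) hujabs 3
            have h3 : (-u j)^3 = -((u j)^3) := by ring
            rw [h3] at h2
            linarith
        linarith
    · -- k ≥ 4
      have hk4' : 4 ≤ k := hk4
      by_cases hex : ∃ i, u i < -(7/10)
      · obtain ⟨i, hi⟩ := hex
        have hpow : (17/10:ℝ)^k ≤ (1 - u i)^k := by
          apply pow_le_pow_left₀ (by norm_num) (by linarith) k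
        have hsingle : (1 - u i)^k ≤ ∑ i', (1 - u i')^k := by
          apply Finset.single_le_sum (fun i' _ => pow_nonneg (by linarith [(hub i').2]) k)
            (Finset.mem_univ i)
        have hprod0 : (0:ℝ) ≤ ∏ i', (1 + u i') :=
          Finset.prod_nonneg (fun i' _ => by linarith [(hub i').1])
        have h17 := seventeen k hk4'
        have hdiv : (41/20:ℝ) ≤ (1/(k:ℝ)) * (17/10)^k := by
          have he : (41/20:ℝ) = (1/(k:ℝ)) * ((41/20)*(k:ℝ)) := by field_simp
          rw [he]
          exact mul_le_mul_of_nonneg_left h17 (by positivity)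
        have hmul : (1/(k:ℝ)) * (17/10)^k ≤ (1/(k:ℝ)) * ∑ i', (1 - u i')^k := by
          apply mul_le_mul_of_nonneg_left _ (by positivity)
          linarith
        linarith
      · push_neg at hex
        obtain ⟨ψ, hψ⟩ : ∃ ψ : Fin k → ℝ,
            ψ = fun i => if 0 ≤ u i then (3/5)*(u i)^2 else (7/5)*(u i)^2 := ⟨_, rfl⟩
        obtain ⟨m, hm⟩ : ∃ m : Fin k → ℝ,
            m = fun i => if 0 ≤ u i then (((k:ℝ)-1)/(k:ℝ) - 3/5)*(u i)^2
              else (((k:ℝ)-1)/2 - 7/5)*(u i)^2 := ⟨_, rfl⟩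
        have hkcast : (3:ℝ) ≤ (k:ℝ) := by exact_mod_cast hk
        have hkcast4 : (4:ℝ) ≤ (k:ℝ) := by exact_mod_cast hk4'
        have hck : (1:ℝ)/15 ≤ ((k:ℝ)-1)/(k:ℝ) - 3/5 := by
          rw [div_sub' (ne_of_gt hkR), le_div_iff₀ hkR]
          nlinarith
        have hck2 : (1:ℝ)/10 ≤ ((k:ℝ)-1)/2 - 7/5 := by linarith
        have H1 : ∀ i, exp (u i - ψ i) ≤ 1 + u i := by
          intro i
          by_cases h : 0 ≤ u i
          · rw [hψ]; simp only [if_pos h]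
            exact expPos h (hub i).2
          · rw [hψ]; simp only [if_neg h]
            push_neg at h
            have hv0 : 0 ≤ -u i := by linarith
            have hv1 : -u i ≤ 7/10 := by have := hex i; linarith
            have hE := expNeg4 hv0 hv1
            have e1 : -(-u i + (7/5)*(-u i)^2) = u i - (7/5)*(u i)^2 := by ring
            have e2 : 1 - (-u i) = 1 + u i := by ring
            rw [e1, e2] at hE
            exact hE
        have H2 : ∀ i, 1/(k:ℝ) - u i + ψ i + m i ≤ (1/(k:ℝ)) * (1 - u i)^k := by
          intro i
          by_cases h : 0 ≤ u i
          · rw [hψ, hm]; simp only [if_pos h]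
            have hP := claimP k (by omega) (u i) h (hub i).2
            have hmul : (1/(k:ℝ)) * (1 - (k:ℝ)*(u i) + ((k:ℝ)-1)*(u i)^2)
                ≤ (1/(k:ℝ)) * (1 - u i)^k :=
              mul_le_mul_of_nonneg_left hP (by positivity)
            have he : (1/(k:ℝ)) * (1 - (k:ℝ)*(u i) + ((k:ℝ)-1)*(u i)^2)
                = 1/(k:ℝ) - u i + (3/5)*(u i)^2 + (((k:ℝ)-1)/(k:ℝ) - 3/5)*(u i)^2 := by
              field_simp; ring
            rw [he] at hmul
            exact hmul
          · rw [hψ, hm]; simp only [if_neg h]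
            push_neg at h
            have hQ := claimQ k (-u i) (by linarith)
            have e0 : (1:ℝ) + -u i = 1 - u i := by ring
            rw [e0] at hQ
            have hmul : (1/(k:ℝ)) * (1 + (k:ℝ)*(-u i) + ((k:ℝ)*((k:ℝ)-1)/2)*(-u i)^2)
                ≤ (1/(k:ℝ)) * (1 - u i)^k :=
              mul_le_mul_of_nonneg_left hQ (by positivity)
            have he : (1/(k:ℝ)) * (1 + (k:ℝ)*(-u i) + ((k:ℝ)*((k:ℝ)-1)/2)*(-u i)^2)
                = 1/(k:ℝ) - u i + (7/5)*(u i)^2 + (((k:ℝ)-1)/2 - 7/5)*(u i)^2 := by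
              field_simp; ring
            rw [he] at hmul
            exact hmul
        have H3 : ∀ i, 0 ≤ m i := by
          intro i
          by_cases h : 0 ≤ u i
          · rw [hm]; simp only [if_pos h]
            have := sq_nonneg (u i)
            nlinarith
          · rw [hm]; simp only [if_neg h]
            have := sq_nonneg (u i)
            nlinarith
        have hcore := core k hk0 u ψ m H1 H2 H3 j
        have hmj : M ≤ m j := by
          by_cases h : 0 ≤ u j
          · rw [hm]; simp only [if_pos h]
            have habs : |u j| = u j := abs_of_nonneg h
            rw [habs] at hujabs
            have h2 : (2*ε₀)^2 ≤ (u j)^2 := by nlinarith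
            nlinarith
          · rw [hm]; simp only [if_neg h]
            push_neg at h
            have habs : |u j| = -u j := abs_of_neg h
            rw [habs] at hujabs
            have h2 : (2*ε₀)^2 ≤ (u j)^2 := by nlinarith
            nlinarith
        linarith
  -- translate back to x coordinates
  have eprod : ∏ i, (1 + u i) = 2^k * ∏ i, x i := by
    have e1 : ∀ i, 1 + u i = 2 * x i := by intro i; rw [huv i]; ring
    calc ∏ i, (1 + u i) = ∏ i, (2 * x i) := Finset.prod_congr rfl (fun i _ => e1 i)
    _ = (∏ _i : Fin k, (2:ℝ)) * ∏ i, x i := by rw [← Finset.prod_mul_distrib]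
    _ = 2^k * ∏ i, x i := by rw [Finset.prod_const, Finset.card_univ, Fintype.card_fin]
  have esum : ∑ i, (1 - u i)^k = 2^k * ∑ i, (1 - x i)^k := by
    have e1 : ∀ i, (1 - u i)^k = 2^k * (1 - x i)^k := by
      intro i
      have e2 : 1 - u i = 2 * (1 - x i) := by rw [huv i]; ring
      rw [e2, mul_pow]
    rw [Finset.sum_congr rfl (fun i _ => e1 i), ← Finset.mul_sum]
  have ez : (2:ℝ)^(1-(k:ℤ)) = 2 / 2^k := by
    rw [zpow_sub₀ (by norm_num : (2:ℝ) ≠ 0), zpow_one, zpow_natCast]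
  have h2T : 2 + M ≤ 2^k * (∏ i, x i + (1/(k:ℝ)) * ∑ i, (1 - x i)^k) := by
    have e3 : 2^k * (∏ i, x i + (1/(k:ℝ)) * ∑ i, (1 - x i)^k)
        = 2^k * ∏ i, x i + (1/(k:ℝ)) * (2^k * ∑ i, (1 - x i)^k) := by ring
    rw [e3, ← eprod, ← esum]
    exact key
  rw [ez, ← add_div, div_le_iff₀ h2k]
  linarith
end

section
/- Let 0 < ε ≤ θ/2. Suppose a red/blue coloring of the edges of K_N with vertex set V admits a partition V = A₁ ⊔ ⋯ ⊔ A_ℓ ⊔ A_{ℓ+1} such that for each i ≤ ℓ the pair (A_i, V) is (1/2, ε)-regular in the blue graph, and |A_{ℓ+1}| ≤ εN. Then the coloring is θ-quasirandom. -/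
/-- The pair `(X, Y)` is `(p, ε)`-regular in color `c`. -/
def PairPReg {N : ℕ} (χ : Fin N → Fin N → Bool) (c : Bool) (p ε : ℝ)
    (X Y : Finset (Fin N)) : Prop :=
  ∀ X' ⊆ X, ∀ Y' ⊆ Y, ε * (X.card : ℝ) ≤ (X'.card : ℝ) → ε * (Y.card : ℝ) ≤ (Y'.card : ℝ) →
    |colorDens χ c X' Y' - p| ≤ ε

set_option maxHeartbeats 800000

lemma colorCount_eq {N : ℕ} (χ : Fin N → Fin N → Bool) (c : Bool) (X Y : Finset (Fin N)) :
    colorCount χ c X Y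
      = ((X ×ˢ Y).filter (fun p => p.1 ≠ p.2 ∧ χ p.1 p.2 = c)).card := by
  rw [colorCount, ← Set.ncard_coe_finset]
  congr 1
  ext p
  simp [Finset.mem_filter, Finset.mem_product, and_assoc]

lemma colorCount_le {N : ℕ} (χ : Fin N → Fin N → Bool) (c : Bool) (X Y : Finset (Fin N)) :
    colorCount χ c X Y ≤ X.card * Y.card := by
  rw [colorCount_eq]
  calc _ ≤ (X ×ˢ Y).card := Finset.card_filter_le _ _
    _ = X.card * Y.card := Finset.card_product X Y

lemma colorCount_union {N : ℕ} (χ : Fin N → Fin N → Bool) (c : Bool)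
    (X₁ X₂ Y : Finset (Fin N)) (h : Disjoint X₁ X₂) :
    colorCount χ c (X₁ ∪ X₂) Y = colorCount χ c X₁ Y + colorCount χ c X₂ Y := by
  rw [colorCount_eq, colorCount_eq, colorCount_eq, Finset.union_product, Finset.filter_union,
    Finset.card_union_of_disjoint]
  exact Finset.disjoint_filter_filter
    ((Finset.disjoint_product).2 (Or.inl h))

lemma colorCount_biUnion {N ℓ : ℕ} (χ : Fin N → Fin N → Bool) (c : Bool)
    (f : Fin ℓ → Finset (Fin N)) (Y : Finset (Fin N))
    (h : ∀ i j, i ≠ j → Disjoint (f i) (f j)) :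
    colorCount χ c (Finset.univ.biUnion f) Y = ∑ i, colorCount χ c (f i) Y := by
  have : (Finset.univ.biUnion f) ×ˢ Y = Finset.univ.biUnion (fun i => (f i) ×ˢ Y) := by
    ext p
    simp only [Finset.mem_biUnion, Finset.mem_product, Finset.mem_univ, true_and]
    tauto
  rw [colorCount_eq, this, Finset.filter_biUnion, Finset.card_biUnion]
  · exact Finset.sum_congr rfl fun i _ => (colorCount_eq χ c (f i) Y).symm
  · intro i _ j _ hij
    exact Finset.disjoint_filter_filter
      ((Finset.disjoint_product).2 (Or.inl (h i j hij)))


/-- If the vertex set can be partitioned into parts `A₁, …, A_ℓ`, each `(1/2, ε)`-regular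
to the whole vertex set, together with one further part of at most `εN` vertices, then
the coloring is `θ`-quasirandom, provided `ε ≤ θ/2`. -/
theorem quasirandom_of_partition (N : ℕ) (χ : Fin N → Fin N → Bool)
    (hsym : ∀ u v, χ u v = χ v u)
    (θ ε : ℝ) (hε0 : 0 < ε) (hεθ : ε ≤ θ / 2)
    (ℓ : ℕ) (A : Fin ℓ → Finset (Fin N)) (Aend : Finset (Fin N))
    (hdisj : ∀ i j, i ≠ j → Disjoint (A i) (A j))
    (hdisj2 : ∀ i, Disjoint (A i) Aend)
    (hcover : ∀ v : Fin N, v ∈ Aend ∨ ∃ i, v ∈ A i)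
    (hreg : ∀ i, PairPReg χ true (1 / 2) ε (A i) Finset.univ)
    (hsmall : (Aend.card : ℝ) ≤ ε * N) :
    Quasirandom χ θ := by
  intro X Y _
  have hxN : (X.card : ℝ) ≤ N := by
    exact_mod_cast (Finset.card_le_univ X).trans_eq (Fintype.card_fin N)
  have hyN : (Y.card : ℝ) ≤ N := by
    exact_mod_cast (Finset.card_le_univ Y).trans_eq (Fintype.card_fin N)
  have hcntXY : (colorCount χ true X Y : ℝ) ≤ (X.card : ℝ) * Y.card := by
    exact_mod_cast colorCount_le χ true X Y
  have hNnn : (0:ℝ) ≤ N := Nat.cast_nonneg N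
  by_cases hY : ε * N ≤ (Y.card : ℝ)
  · -- main case
    -- decomposition of X
    have hXeq : X = (Finset.univ.biUnion fun i => X ∩ A i) ∪ (X ∩ Aend) := by
      ext v
      simp only [Finset.mem_union, Finset.mem_biUnion, Finset.mem_inter, Finset.mem_univ,
        true_and]
      constructor
      · intro hv
        rcases hcover v with h | ⟨i, hi⟩
        · exact Or.inr ⟨hv, h⟩
        · exact Or.inl ⟨i, hv, hi⟩
      · rintro (⟨i, hv, _⟩ | ⟨hv, _⟩) <;> exact hv
    have hdisjXi : ∀ i j : Fin ℓ, i ≠ j → Disjoint (X ∩ A i) (X ∩ A j) := fun i j hij =>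
      ((hdisj i j hij).mono Finset.inter_subset_right Finset.inter_subset_right)
    have hdisjBig : Disjoint (Finset.univ.biUnion fun i => X ∩ A i) (X ∩ Aend) := by
      rw [Finset.disjoint_biUnion_left]
      intro i _
      exact (hdisj2 i).mono Finset.inter_subset_right Finset.inter_subset_right
    have hcount : colorCount χ true X Y
        = (∑ i, colorCount χ true (X ∩ A i) Y) + colorCount χ true (X ∩ Aend) Y := by
      conv_lhs => rw [hXeq]
      rw [colorCount_union _ _ _ _ _ hdisjBig, colorCount_biUnion _ _ _ _ hdisjXi]
    have hcard : X.card = (∑ i, (X ∩ A i).card) + (X ∩ Aend).card := by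
      conv_lhs => rw [hXeq]
      rw [Finset.card_union_of_disjoint hdisjBig,
        Finset.card_biUnion (fun i _ j _ h => hdisjXi i j h)]
    -- per part bound
    have hkey : ∀ i, |(colorCount χ true (X ∩ A i) Y : ℝ)
        - ((X ∩ A i).card : ℝ) * Y.card / 2| ≤ ε * ((A i).card : ℝ) * N := by
      intro i
      set X' := X ∩ A i with hX'
      have hcnt : (colorCount χ true X' Y : ℝ) ≤ (X'.card : ℝ) * Y.card := by
        exact_mod_cast colorCount_le χ true X' Y
      have hcnt0 : (0:ℝ) ≤ (colorCount χ true X' Y : ℝ) := Nat.cast_nonneg _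
      have hx'A : (X'.card : ℝ) ≤ ((A i).card : ℝ) := by
        exact_mod_cast Finset.card_le_card (Finset.inter_subset_right)
      have hx'0 : (0:ℝ) ≤ (X'.card : ℝ) := Nat.cast_nonneg _
      by_cases hX0 : X' = ∅
      · simp only [hX0, colorCount_eq, Finset.empty_product, Finset.filter_empty,
          Finset.card_empty, Nat.cast_zero, Finset.card_empty, Nat.cast_zero]
        rw [zero_mul, zero_div, sub_zero, abs_zero]
        exact mul_nonneg (mul_nonneg hε0.le (Nat.cast_nonneg _)) hNnn
      · have hne : X'.Nonempty := Finset.nonempty_iff_ne_empty.2 hX0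
        have hN1 : 0 < N := by
          obtain ⟨v, _⟩ := hne
          exact v.pos
        have hy0 : (0:ℝ) < Y.card := lt_of_lt_of_le (by positivity) hY
        by_cases hc : ε * ((A i).card : ℝ) ≤ (X'.card : ℝ)
        · have hY' : ε * ((Finset.univ : Finset (Fin N)).card : ℝ) ≤ (Y.card : ℝ) := by
            rwa [Finset.card_univ, Fintype.card_fin]
          have h1 := hreg i X' Finset.inter_subset_right Y (Finset.subset_univ Y) hc hY'
          have hx0 : (0:ℝ) < X'.card := by
            exact_mod_cast Finset.card_pos.2 hne
          have h2 : (colorDens χ true X' Y - 1/2) * ((X'.card : ℝ) * Y.card)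
              = (colorCount χ true X' Y : ℝ) - (X'.card : ℝ) * Y.card / 2 := by
            unfold colorDens
            rw [sub_mul, div_mul_cancel₀ _ (mul_pos hx0 hy0).ne']
            ring
          calc |(colorCount χ true X' Y : ℝ) - (X'.card : ℝ) * Y.card / 2|
              = |colorDens χ true X' Y - 1/2| * ((X'.card : ℝ) * Y.card) := by
                rw [← h2, abs_mul, abs_of_pos (mul_pos hx0 hy0)]
            _ ≤ ε * ((X'.card : ℝ) * Y.card) :=
                mul_le_mul_of_nonneg_right h1 (mul_pos hx0 hy0).le
            _ ≤ ε * (((A i).card : ℝ) * N) := by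
                have := mul_le_mul hx'A hyN hy0.le (Nat.cast_nonneg _)
                exact mul_le_mul_of_nonneg_left this hε0.le
            _ = ε * ((A i).card : ℝ) * N := by ring
        · push_neg at hc
          calc |(colorCount χ true X' Y : ℝ) - (X'.card : ℝ) * Y.card / 2|
              ≤ (X'.card : ℝ) * Y.card := by
                rw [abs_le]
                constructor <;> nlinarith
            _ ≤ (ε * ((A i).card : ℝ)) * N :=
                mul_le_mul hc.le hyN hy0.le (mul_nonneg hε0.le (Nat.cast_nonneg _))
            _ = ε * ((A i).card : ℝ) * N := by ring
    -- end part bound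
    have hend : |(colorCount χ true (X ∩ Aend) Y : ℝ)
        - ((X ∩ Aend).card : ℝ) * Y.card / 2| ≤ (ε * N) * N := by
      have hcnt : (colorCount χ true (X ∩ Aend) Y : ℝ) ≤ ((X ∩ Aend).card : ℝ) * Y.card := by
        exact_mod_cast colorCount_le χ true (X ∩ Aend) Y
      have hcnt0 : (0:ℝ) ≤ (colorCount χ true (X ∩ Aend) Y : ℝ) := Nat.cast_nonneg _
      have hxe : ((X ∩ Aend).card : ℝ) ≤ ε * N := by
        refine le_trans ?_ hsmall
        exact_mod_cast Finset.card_le_card (Finset.inter_subset_right)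
      have hy0 : (0:ℝ) ≤ (Y.card : ℝ) := Nat.cast_nonneg _
      have hxe0 : (0:ℝ) ≤ ((X ∩ Aend).card : ℝ) := Nat.cast_nonneg _
      calc |(colorCount χ true (X ∩ Aend) Y : ℝ) - ((X ∩ Aend).card : ℝ) * Y.card / 2|
          ≤ ((X ∩ Aend).card : ℝ) * Y.card := by
            rw [abs_le]; constructor <;> nlinarith
        _ ≤ (ε * N) * N := mul_le_mul hxe hyN hy0 (by positivity)
    -- sum of part sizes
    have hAsum : (∑ i, ((A i).card : ℝ)) ≤ N := by
      have h1 : ∑ i, (A i).card = (Finset.univ.biUnion A).card :=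
        (Finset.card_biUnion (fun i _ j _ h => hdisj i j h)).symm
      have h2 : (Finset.univ.biUnion A).card ≤ N :=
        (Finset.card_le_univ _).trans_eq (Fintype.card_fin N)
      calc (∑ i, ((A i).card : ℝ)) = ((∑ i, (A i).card : ℕ) : ℝ) := by push_cast; ring
        _ ≤ (N : ℝ) := by exact_mod_cast h1 ▸ h2
    -- assemble
    have hsplit : |(colorCount χ true X Y : ℝ) - (X.card : ℝ) * (Y.card : ℝ) / 2|
        ≤ (∑ i, |(colorCount χ true (X ∩ A i) Y : ℝ)
              - ((X ∩ A i).card : ℝ) * Y.card / 2|)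
          + |(colorCount χ true (X ∩ Aend) Y : ℝ)
              - ((X ∩ Aend).card : ℝ) * Y.card / 2| := by
      rw [hcount, hcard]
      push_cast
      have heq : ((∑ i, (colorCount χ true (X ∩ A i) Y : ℝ))
            + (colorCount χ true (X ∩ Aend) Y : ℝ))
          - ((∑ i, ((X ∩ A i).card : ℝ)) + ((X ∩ Aend).card : ℝ)) * (Y.card : ℝ) / 2
          = (∑ i, ((colorCount χ true (X ∩ A i) Y : ℝ)
              - ((X ∩ A i).card : ℝ) * Y.card / 2))
            + ((colorCount χ true (X ∩ Aend) Y : ℝ)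
              - ((X ∩ Aend).card : ℝ) * Y.card / 2) := by
        rw [Finset.sum_sub_distrib, ← Finset.sum_div, ← Finset.sum_mul]
        ring
      rw [heq]
      exact (abs_add_le _ _).trans
        (add_le_add_left (Finset.abs_sum_le_sum_abs _ _) _)
    calc |(colorCount χ true X Y : ℝ) - (X.card : ℝ) * (Y.card : ℝ) / 2|
        ≤ (∑ i, ε * ((A i).card : ℝ) * N) + (ε * N) * N :=
          hsplit.trans (add_le_add (Finset.sum_le_sum fun i _ => hkey i) hend)
      _ = ε * N * (∑ i, ((A i).card : ℝ)) + ε * N * N := by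
          rw [Finset.mul_sum]
          congr 1
          exact Finset.sum_congr rfl fun i _ => by ring
      _ ≤ ε * N * N + ε * N * N := by
          have h1 : (0:ℝ) ≤ ε * N := by positivity
          have := mul_le_mul_of_nonneg_left hAsum h1
          linarith
      _ ≤ θ * (N : ℝ) ^ 2 := by
          have hsq : (N:ℝ)^2 = (N:ℝ) * N := sq (N:ℝ)
          have hh : 2*ε*(N:ℝ)^2 ≤ θ*(N:ℝ)^2 :=
            mul_le_mul_of_nonneg_right (by linarith : 2*ε ≤ θ) (sq_nonneg _)
          linarith
  · -- Y is small
    push_neg at hY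
    have hcnt0 : (0:ℝ) ≤ (colorCount χ true X Y : ℝ) := Nat.cast_nonneg _
    have hy0 : (0:ℝ) ≤ (Y.card : ℝ) := Nat.cast_nonneg _
    have hx0 : (0:ℝ) ≤ (X.card : ℝ) := Nat.cast_nonneg _
    have hxy : (X.card : ℝ) * Y.card ≤ ε * N ^ 2 := by nlinarith
    have hh : (0:ℝ) ≤ (θ/2 - ε) * (N:ℝ)^2 :=
      mul_nonneg (by linarith) (sq_nonneg _)
    have hh2 : (0:ℝ) ≤ ε * (N:ℝ)^2 := mul_nonneg hε0.le (sq_nonneg _)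
    rw [abs_le]
    constructor <;> linarith
end
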